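/- arXiv:1407.2802 — 11 statements merged into one kernel-verified Lean document; each statement's English description precedes it below -/
import Mathlib

section
/- Let r ≥ 1 be an integer and let w : ℤ → ℂ be a sequence such that w_n → 0 as n → +∞. Suppose that for every integer n ≥ r+1 one has (n+r)(n+r−1)·w_{n−1} = (n−r)(n−r+1)·w_{n+1}. Then w_n = 0 for every integer n ≥ r. -/
/-- If `w : ℤ → ℂ` tends to `0` at `+∞` and satisfies
`(n+r)(n+r−1)·w_{n−1} = (n−r)(n−r+1)·w_{n+1}` for all `n ≥ r+1`, then `w_n = 0`
for all `n ≥ r`. -/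
theorem stmt_0 (r : ℤ) (hr : 1 ≤ r) (w : ℤ → ℂ)
    (hlim : Filter.Tendsto w Filter.atTop (nhds 0))
    (hrec : ∀ n : ℤ, r + 1 ≤ n →
      ((n + r : ℤ) : ℂ) * ((n + r - 1 : ℤ) : ℂ) * w (n - 1) =
        ((n - r : ℤ) : ℂ) * ((n - r + 1 : ℤ) : ℂ) * w (n + 1)) :
    ∀ n : ℤ, r ≤ n → w n = 0 := by
  have key : ∀ m : ℤ, r ≤ m → ‖w m‖ ≤ ‖w (m + 2)‖ := by
    intro m hm
    have h := hrec (m + 1) (by omega)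
    have h1 : m + 1 - 1 = m := by ring
    have h2 : (m : ℤ) + 1 + 1 = m + 2 := by ring
    rw [h1, h2] at h
    set a : ℤ := (m + 1 + r) * (m + 1 + r - 1) with ha_def
    set b : ℤ := (m + 1 - r) * (m + 1 - r + 1) with hb_def
    have ha : (0:ℤ) < a := by have : 0 < m + 1 + r := by omega
                              have : 0 < m + 1 + r - 1 := by omega
                              positivity
    have hb : (0:ℤ) ≤ b := by have : 0 < m + 1 - r := by omega
                              have : 0 < m + 1 - r + 1 := by omega
                              positivity
    have hba : b ≤ a := by nlinarith [hm, hr]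
    have h' : ((a:ℤ):ℂ) * w m = ((b:ℤ):ℂ) * w (m + 2) := by
      push_cast [ha_def, hb_def] at h ⊢
      linear_combination h
    have hn := congrArg norm h'
    rw [norm_mul, norm_mul, Complex.norm_intCast, Complex.norm_intCast] at hn
    have hA : (0:ℝ) < (a:ℝ) := by exact_mod_cast ha
    have hB0 : (0:ℝ) ≤ (b:ℝ) := by exact_mod_cast hb
    have hB : ((b:ℝ)) ≤ (a:ℝ) := by exact_mod_cast hba
    rw [abs_of_pos hA, abs_of_nonneg hB0] at hn
    nlinarith [norm_nonneg (w (m + 2)), norm_nonneg (w m)]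
  intro n hn
  have mono : ∀ k : ℕ, ‖w n‖ ≤ ‖w (n + 2 * k)‖ := by
    intro k
    induction k with
    | zero => simp
    | succ k ih =>
      have step := key (n + 2 * k) (by omega)
      have : (n + 2 * (k:ℤ)) + 2 = n + 2 * ((k:ℕ) + 1 : ℕ) := by push_cast; ring
      rw [this] at step
      exact le_trans ih step
  have targ : Filter.Tendsto (fun k : ℕ => (n + 2 * (k:ℤ))) Filter.atTop Filter.atTop := by
    apply Filter.tendsto_atTop.mpr
    intro b
    filter_upwards [Filter.eventually_ge_atTop b.toNat] with k hk
    omega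
  have tend : Filter.Tendsto (fun k : ℕ => w (n + 2 * k)) Filter.atTop (nhds 0) :=
    hlim.comp targ
  have hnorm : Filter.Tendsto (fun k : ℕ => ‖w (n + 2 * k)‖) Filter.atTop (nhds 0) := by
    simpa using tend.norm
  have : ‖w n‖ ≤ 0 := ge_of_tendsto' hnorm fun k => mono k
  exact norm_le_zero_iff.mp this
end

section
/- Let r ≥ 1, s ≥ 0 be integers and let (b_k)_{k∈ℤ} be a family of polynomials with complex coefficients such that b_k = 0 whenever |k| > s, and such that for all integers i and all integers j with |j| ≤ r−1 one has b_{j−i}(−j) = −b_{j+i}(−j). Define, for u : ℤ → ℂ, (P·u)_n = Σ_{k=−s}^{s} b_k(n)·u_{n+k}. Then for every symmetric sequence u : ℤ → ℂ (i.e., u_{−n} = u_n for all n) and every integer n with |n| ≤ r−1, one has (P·u)_n = 0. -/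
open Polynomial

/-- The recurrence operator `P` with polynomial coefficients `b_k`:
`(P·u)_n = Σ_{k=−s}^{s} b_k(n)·u_{n+k}`. -/
noncomputable def recOp2 (s : ℕ) (b : ℤ → Polynomial ℂ) (u : ℤ → ℂ) (n : ℤ) : ℂ :=
  ∑ k ∈ Finset.Icc (-(s : ℤ)) (s : ℤ), (b k).eval (n : ℂ) * u (n + k)

/-- if `b_k = 0` for `|k| > s` and `b_{j−i}(−j) = −b_{j+i}(−j)` for
all `i` and all `|j| ≤ r−1`, then the image under `P` of any symmetric sequence
vanishes at all indices `n` with `|n| ≤ r−1`. -/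
theorem stmt_2 (r : ℤ) (hr : 1 ≤ r) (s : ℕ) (b : ℤ → Polynomial ℂ)
    (hb0 : ∀ k : ℤ, (s : ℤ) < |k| → b k = 0)
    (hanti : ∀ i j : ℤ, |j| ≤ r - 1 →
      (b (j - i)).eval ((-j : ℤ) : ℂ) = -(b (j + i)).eval ((-j : ℤ) : ℂ))
    (u : ℤ → ℂ) (husym : ∀ n : ℤ, u (-n) = u n) :
    ∀ n : ℤ, |n| ≤ r - 1 → recOp2 s b u n = 0 := by
  intro n hn
  have hn' : |(-n)| ≤ r - 1 := by simpa using hn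
  have key : ∀ i : ℤ, (b (-n - i)).eval (n : ℂ) = -(b (-n + i)).eval (n : ℂ) := by
    intro i
    have h := hanti i (-n) hn'
    simpa using h
  set m : ℤ := (s : ℤ) + |n| with hm
  have habs1 : -n ≤ |n| := neg_le_abs n
  have habs2 : n ≤ |n| := le_abs_self n
  have hsub : Finset.Icc (-(s : ℤ)) (s : ℤ) ⊆ Finset.Icc (-n - m) (-n + m) := by
    intro k hk
    simp only [Finset.mem_Icc] at *
    omega
  have hext : recOp2 s b u n
      = ∑ k ∈ Finset.Icc (-n - m) (-n + m), (b k).eval (n : ℂ) * u (n + k) := by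
    unfold recOp2
    refine Finset.sum_subset hsub ?_
    intro k _ hk'
    simp only [Finset.mem_Icc, not_and_or, not_le] at hk'
    have hks : (s : ℤ) < |k| := by rcases hk' with h | h <;> [exact lt_of_lt_of_le (by omega : (s:ℤ) < -k) (neg_le_abs k); exact lt_of_lt_of_le h (le_abs_self k)]
    rw [hb0 k hks]
    simp
  rw [hext]
  refine Finset.sum_involution (fun k _ => -2 * n - k) ?_ ?_ ?_ ?_
  · intro k hk
    have hb' : (b (-2 * n - k)).eval (n : ℂ) = -(b k).eval (n : ℂ) := by
      have h := key (n + k)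
      have e1 : -n - (n + k) = -2 * n - k := by ring
      have e2 : -n + (n + k) = k := by ring
      rw [e1, e2] at h
      exact h
    have hu' : u (n + (-2 * n - k)) = u (n + k) := by
      have e : n + (-2 * n - k) = -(n + k) := by ring
      rw [e, husym]
    rw [hb', hu']
    ring
  · intro k hk hfk
    intro hcon
    have hcon' : -2 * n - k = k := hcon
    have hkn : k = -n := by omega
    apply hfk
    subst hkn
    have h := key 0
    have : (b (-n)).eval (n : ℂ) = 0 := by
      simp only [sub_zero, add_zero] at h
      linear_combination h / 2
    simp [this]
  · intro k hk
    simp only [Finset.mem_Icc] at hk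
    show -2 * n - k ∈ Finset.Icc (-n - m) (-n + m)
    simp only [Finset.mem_Icc]
    omega
  · intro k hk
    show -2 * n - (-2 * n - k) = k
    ring
end

section
/- Let a, b be real polynomials such that b(x) ≠ 0 for all x ∈ [−1,1], and let y(x) = a(x)/b(x) on [−1,1]. For n ∈ ℤ define the Chebyshev coefficients y_n = (1/π)·∫_{−1}^{1} y(x)·T_n(x)·(1−x²)^{−1/2} dx, and similarly a_n and b_n for the polynomials a and b (so y_{−n} = y_n, a_{−n} = a_n, b_{−n} = b_n, and b_i = 0 for |i| > deg b). Then for every n ∈ ℤ, Σ_{i=−deg b}^{deg b} b_i · y_{n−i} = a_n. -/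
open Polynomial intervalIntegral

/-- The `n`-th Chebyshev coefficient of a function `f : ℝ → ℝ`:
`(1/π)·∫_{−1}^{1} f(x)·T_n(x)·(1−x²)^{−1/2} dx`. -/
noncomputable def chebCoeff (f : ℝ → ℝ) (n : ℤ) : ℝ :=
  (1 / Real.pi) *
    ∫ x in (-1 : ℝ)..1, f x * (Polynomial.Chebyshev.T ℝ n).eval x / Real.sqrt (1 - x ^ 2)

open Real Set MeasureTheory

lemma meas_aux : Measurable (fun x : ℝ => 1 / Real.sqrt (1 - x ^ 2)) := by
  apply Measurable.div measurable_const
  exact Real.continuous_sqrt.measurable.comp (by fun_prop)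

lemma iint_right : IntervalIntegrable (fun x : ℝ => 1 / Real.sqrt (1 - x ^ 2)) volume 0 1 := by
  have h : IntervalIntegrable (fun x : ℝ => ((1 - x) ^ (-(1/2) : ℝ))) volume 0 1 := by
    have := ((intervalIntegral.intervalIntegrable_rpow' (a := 0) (b := 1) (r := -(1/2))
      (by norm_num)).comp_sub_left 1).symm
    simpa using this
  apply h.mono_fun (meas_aux.aestronglyMeasurable)
  filter_upwards [MeasureTheory.ae_restrict_mem measurableSet_uIoc] with x hx
  rw [Set.uIoc_of_le (by norm_num : (0:ℝ) ≤ 1)] at hx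
  obtain ⟨hx0, hx1⟩ := hx
  rcases eq_or_lt_of_le hx1 with rfl | hlt
  · simp [Real.sqrt_eq_zero', Real.zero_rpow]
  · have h1x : 0 < 1 - x := by linarith
    have hsq : Real.sqrt (1 - x) ≤ Real.sqrt (1 - x ^ 2) := by
      apply Real.sqrt_le_sqrt; nlinarith
    have hpos : 0 < Real.sqrt (1 - x) := Real.sqrt_pos.2 h1x
    have : (1 - x) ^ (-(1/2) : ℝ) = 1 / Real.sqrt (1 - x) := by
      rw [Real.rpow_neg h1x.le, ← Real.sqrt_eq_rpow, one_div]
    rw [Real.norm_of_nonneg (by positivity), Real.norm_of_nonneg (by positivity), this]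
    apply one_div_le_one_div_of_le hpos hsq

lemma iint_base : IntervalIntegrable (fun x : ℝ => 1 / Real.sqrt (1 - x ^ 2)) volume (-1) 1 := by
  have hleft : IntervalIntegrable (fun x : ℝ => 1 / Real.sqrt (1 - x ^ 2)) volume (-1) 0 := by
    have := (iint_right.comp_sub_left 0).symm
    simpa using this
  exact hleft.trans iint_right

/-- Key integrability: `g x / sqrt (1-x^2)` is interval integrable when `g` is
continuous on `[-1,1]`. -/
lemma iint_of_continuousOn {g : ℝ → ℝ} (hg : ContinuousOn g (Set.Icc (-1 : ℝ) 1))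
    (hm : Measurable g) :
    IntervalIntegrable (fun x => g x / Real.sqrt (1 - x ^ 2)) volume (-1) 1 := by
  obtain ⟨C, hC⟩ := (isCompact_Icc (a := (-1:ℝ)) (b := 1)).exists_bound_of_continuousOn hg
  have hC0 : 0 ≤ C := le_trans (norm_nonneg _) (hC 0 (by norm_num))
  have h : IntervalIntegrable (fun x : ℝ => C * (1 / Real.sqrt (1 - x ^ 2))) volume (-1) 1 :=
    iint_base.const_mul C
  have hms : Measurable fun x : ℝ => Real.sqrt (1 - x ^ 2) :=
    Real.continuous_sqrt.measurable.comp (by fun_prop)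
  apply h.mono_fun ((hm.div hms).aestronglyMeasurable)
  filter_upwards [MeasureTheory.ae_restrict_mem measurableSet_uIoc] with x hx
  rw [Set.uIoc_of_le (by norm_num : (-1:ℝ) ≤ 1)] at hx
  have hxm : x ∈ Set.Icc (-1:ℝ) 1 := ⟨hx.1.le, hx.2⟩
  have hb := hC x hxm
  rw [Real.norm_eq_abs, Real.norm_eq_abs, Pi.div_apply, abs_div, abs_mul, abs_of_nonneg hC0,
    abs_of_nonneg (Real.sqrt_nonneg _), abs_of_nonneg (by positivity : (0:ℝ) ≤ 1 / Real.sqrt (1 - x^2)),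
    div_eq_mul_one_div |g x|]
  exact mul_le_mul_of_nonneg_right (by simpa using hb) (by positivity)

lemma Jint_zero : ∫ x in (-1:ℝ)..1, 1 / Real.sqrt (1 - x ^ 2) = Real.pi := by
  have := intervalIntegral.integral_eq_sub_of_hasDeriv_right_of_le (f := Real.arcsin)
    (f' := fun x => 1 / Real.sqrt (1 - x ^ 2)) (by norm_num : (-1:ℝ) ≤ 1)
    (Real.continuous_arcsin.continuousOn)
    (fun x hx => (Real.hasDerivAt_arcsin (ne_of_gt hx.1) (ne_of_lt hx.2)).hasDerivWithinAt)
    iint_base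
  rw [this, Real.arcsin_one, Real.arcsin_neg_one]; ring

lemma Jint_ne_zero (m : ℤ) (hm : m ≠ 0) :
    ∫ x in (-1:ℝ)..1, (Polynomial.Chebyshev.T ℝ m).eval x / Real.sqrt (1 - x ^ 2) = 0 := by
  set F : ℝ → ℝ := fun x => -(1 / (m : ℝ)) * Real.sin ((m : ℝ) * Real.arccos x) with hF
  have hint : IntervalIntegrable
      (fun x => (Polynomial.Chebyshev.T ℝ m).eval x / Real.sqrt (1 - x ^ 2)) volume (-1) 1 :=
    iint_of_continuousOn ((Polynomial.Chebyshev.T ℝ m).continuous_aeval.continuousOn)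
      (Polynomial.Chebyshev.T ℝ m).continuous.measurable
  have hcont : ContinuousOn F (Set.Icc (-1:ℝ) 1) :=
    (continuous_const.mul (Real.continuous_sin.comp
      (continuous_const.mul Real.continuous_arccos))).continuousOn
  have hderiv : ∀ x ∈ Set.Ioo (-1:ℝ) 1, HasDerivWithinAt F
      ((Polynomial.Chebyshev.T ℝ m).eval x / Real.sqrt (1 - x ^ 2)) (Set.Ioi x) x := by
    intro x hx
    have harc : HasDerivAt Real.arccos (-(1 / Real.sqrt (1 - x ^ 2))) x :=
      Real.hasDerivAt_arccos (ne_of_gt hx.1) (ne_of_lt hx.2)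
    have h1 : HasDerivAt (fun x => Real.sin ((m:ℝ) * Real.arccos x))
        (Real.cos ((m:ℝ) * Real.arccos x) * ((m:ℝ) * -(1 / Real.sqrt (1 - x ^ 2)))) x :=
      (harc.const_mul (m:ℝ)).sin
    have h2 := h1.const_mul (-(1 / (m:ℝ)))
    have hz : Real.cos ((m:ℝ) * Real.arccos x) = (Polynomial.Chebyshev.T ℝ m).eval x := by
      rw [← Polynomial.Chebyshev.T_real_cos (Real.arccos x) m,
        Real.cos_arccos (by linarith [hx.1]) (by linarith [hx.2])]
    have hm' : (m : ℝ) ≠ 0 := Int.cast_ne_zero.mpr hm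
    have : -(1 / (m:ℝ)) * (Real.cos ((m:ℝ) * Real.arccos x) * ((m:ℝ) * -(1 / Real.sqrt (1 - x ^ 2))))
        = (Polynomial.Chebyshev.T ℝ m).eval x / Real.sqrt (1 - x ^ 2) := by
      rw [hz]; field_simp
    rw [hF]
    exact (this ▸ h2).hasDerivWithinAt
  have := intervalIntegral.integral_eq_sub_of_hasDeriv_right_of_le (by norm_num : (-1:ℝ) ≤ 1)
    hcont hderiv hint
  rw [this, hF]
  simp only [Real.arccos_one, Real.arccos_neg_one, mul_zero, Real.sin_zero]
  rw [Real.sin_int_mul_pi]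
  ring

lemma chebCoeff_congr {f g : ℝ → ℝ} (h : Set.EqOn f g (Set.Icc (-1:ℝ) 1)) (n : ℤ) :
    chebCoeff f n = chebCoeff g n := by
  unfold chebCoeff
  congr 1
  apply intervalIntegral.integral_congr
  intro x hx
  rw [Set.uIcc_of_le (by norm_num : (-1:ℝ) ≤ 1)] at hx
  simp only [h hx]

lemma chebCoeff_one (m : ℤ) : chebCoeff (fun _ => 1) m = if m = 0 then 1 else 0 := by
  unfold chebCoeff
  simp only [one_mul]
  rcases eq_or_ne m 0 with rfl | hm
  · rw [if_pos rfl]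
    simp only [Polynomial.Chebyshev.T_zero, Polynomial.eval_one]
    rw [Jint_zero, one_div, inv_mul_cancel₀ Real.pi_ne_zero]
  · rw [if_neg hm, Jint_ne_zero m hm, mul_zero]

lemma chebCoeff_T_mul (f : ℝ → ℝ) (hf : ContinuousOn f (Set.Icc (-1:ℝ) 1))
    (hm : Measurable f) (j n : ℤ) :
    chebCoeff (fun x => (Polynomial.Chebyshev.T ℝ j).eval x * f x) n
      = (chebCoeff f (n + j) + chebCoeff f (n - j)) / 2 := by
  have key : ∀ x : ℝ, (Polynomial.Chebyshev.T ℝ j).eval x * (Polynomial.Chebyshev.T ℝ n).eval x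
      = ((Polynomial.Chebyshev.T ℝ (n + j)).eval x + (Polynomial.Chebyshev.T ℝ (n - j)).eval x) / 2 := by
    intro x
    have h := congrArg (Polynomial.eval x) (Polynomial.Chebyshev.T_mul_T (R := ℝ) j n)
    rw [show j - n = -(n - j) by ring, Polynomial.Chebyshev.T_neg,
      show j + n = n + j by ring] at h
    simp only [Polynomial.eval_add, Polynomial.eval_mul, Polynomial.eval_ofNat] at h
    linarith
  have hint : ∀ k : ℤ, IntervalIntegrable
      (fun x => f x * (Polynomial.Chebyshev.T ℝ k).eval x / Real.sqrt (1 - x ^ 2))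
      MeasureTheory.volume (-1) 1 := fun k =>
    iint_of_continuousOn (hf.mul ((Polynomial.Chebyshev.T ℝ k).continuous.continuousOn))
      (hm.mul (Polynomial.Chebyshev.T ℝ k).continuous.measurable)
  unfold chebCoeff
  have heq : (fun x => (Polynomial.Chebyshev.T ℝ j).eval x * f x *
        (Polynomial.Chebyshev.T ℝ n).eval x / Real.sqrt (1 - x ^ 2))
      = fun x => (f x * (Polynomial.Chebyshev.T ℝ (n+j)).eval x / Real.sqrt (1 - x ^ 2)
          + f x * (Polynomial.Chebyshev.T ℝ (n-j)).eval x / Real.sqrt (1 - x ^ 2)) / 2 := by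
    funext x
    rw [show (Polynomial.Chebyshev.T ℝ j).eval x * f x * (Polynomial.Chebyshev.T ℝ n).eval x
      = f x * ((Polynomial.Chebyshev.T ℝ j).eval x * (Polynomial.Chebyshev.T ℝ n).eval x) by ring,
      key x]
    ring
  rw [heq, intervalIntegral.integral_div, intervalIntegral.integral_add (hint (n+j)) (hint (n-j))]
  ring

lemma chebCoeff_T (j i : ℤ) :
    chebCoeff (fun x => (Polynomial.Chebyshev.T ℝ j).eval x) i
      = ((if i + j = 0 then (1:ℝ) else 0) + (if i - j = 0 then (1:ℝ) else 0)) / 2 := by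
  have h := chebCoeff_T_mul (fun _ => 1) continuousOn_const measurable_const j i
  simp only [mul_one] at h
  rw [h, chebCoeff_one, chebCoeff_one]

lemma T_facts : ∀ j : ℕ, (Polynomial.Chebyshev.T ℝ (j:ℤ)).natDegree ≤ j ∧
    (Polynomial.Chebyshev.T ℝ (j:ℤ)).coeff j = 2 ^ (j - 1) := by
  intro j
  induction j using Nat.twoStepInduction with
  | zero => simp [Polynomial.Chebyshev.T_zero]
  | one => simp [Polynomial.Chebyshev.T_one]
  | more j ih1 ih2 =>
    have hT : Polynomial.Chebyshev.T ℝ ((j:ℤ) + 2)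
        = 2 * Polynomial.X * Polynomial.Chebyshev.T ℝ ((j:ℤ) + 1) - Polynomial.Chebyshev.T ℝ (j:ℤ) :=
      Polynomial.Chebyshev.T_add_two ℝ (j:ℤ)
    have hcast : ((j + 2 : ℕ) : ℤ) = (j:ℤ) + 2 := by push_cast; ring
    have hcast1 : ((j + 1 : ℕ) : ℤ) = (j:ℤ) + 1 := by push_cast; ring
    rw [hcast, hT]
    constructor
    · apply le_trans (Polynomial.natDegree_sub_le _ _)
      apply max_le
      · apply le_trans (Polynomial.natDegree_mul_le)
        have h1 : (2 * Polynomial.X : Polynomial ℝ).natDegree ≤ 1 := by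
          apply le_trans Polynomial.natDegree_mul_le
          simp
        have h2 := ih2.1
        rw [hcast1] at h2
        omega
      · omega
    · rw [Polynomial.coeff_sub]
      have hz : (Polynomial.Chebyshev.T ℝ (j:ℤ)).coeff (j + 2) = 0 :=
        Polynomial.coeff_eq_zero_of_natDegree_lt (lt_of_le_of_lt ih1.1 (by omega))
      have hx : (2 * Polynomial.X * Polynomial.Chebyshev.T ℝ ((j:ℤ) + 1)).coeff (j + 2)
          = 2 * (Polynomial.Chebyshev.T ℝ ((j:ℤ) + 1)).coeff (j + 1) := by
        rw [show (2 * Polynomial.X * Polynomial.Chebyshev.T ℝ ((j:ℤ) + 1))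
          = 2 * (Polynomial.X * Polynomial.Chebyshev.T ℝ ((j:ℤ) + 1)) by ring,
          Polynomial.coeff_ofNat_mul, show j + 2 = (j + 1) + 1 from rfl, Polynomial.coeff_X_mul]
      rw [hx, hz]
      have h2 := ih2.2
      rw [hcast1] at h2
      simp only [Nat.add_sub_cancel] at h2
      rw [h2]
      norm_num
      ring

lemma cheb_expand : ∀ (d : ℕ) (p : Polynomial ℝ), p.natDegree ≤ d →
    ∃ c : ℕ → ℝ, p = ∑ j ∈ Finset.range (d + 1),
      Polynomial.C (c j) * Polynomial.Chebyshev.T ℝ (j:ℤ) := by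
  intro d
  induction d with
  | zero =>
    intro p hp
    refine ⟨fun _ => p.coeff 0, ?_⟩
    rw [Polynomial.eq_C_of_natDegree_le_zero hp]
    simp [Polynomial.Chebyshev.T_zero]
  | succ d ih =>
    intro p hp
    set k : ℝ := p.coeff (d + 1) / 2 ^ d with hk
    set q : Polynomial ℝ := p - Polynomial.C k * Polynomial.Chebyshev.T ℝ ((d:ℤ) + 1) with hq
    have hcast1 : ((d + 1 : ℕ) : ℤ) = (d:ℤ) + 1 := by push_cast; ring
    have hTdeg : (Polynomial.Chebyshev.T ℝ ((d:ℤ) + 1)).natDegree ≤ d + 1 := by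
      have := (T_facts (d+1)).1; rwa [hcast1] at this
    have hTco : (Polynomial.Chebyshev.T ℝ ((d:ℤ) + 1)).coeff (d + 1) = 2 ^ d := by
      have := (T_facts (d+1)).2; rw [hcast1] at this; simpa using this
    have hqdeg : q.natDegree ≤ d := by
      rw [Polynomial.natDegree_le_iff_coeff_eq_zero]
      intro m hm
      rw [hq, Polynomial.coeff_sub, Polynomial.coeff_C_mul]
      rcases eq_or_lt_of_le (Nat.succ_le_of_lt hm) with h | h
      · rw [← h, hTco, hk]
        field_simp
        ring
      · have h1 : p.coeff m = 0 :=
          Polynomial.coeff_eq_zero_of_natDegree_lt (lt_of_le_of_lt hp h)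
        have h2 : (Polynomial.Chebyshev.T ℝ ((d:ℤ) + 1)).coeff m = 0 :=
          Polynomial.coeff_eq_zero_of_natDegree_lt (lt_of_le_of_lt hTdeg h)
        rw [h1, h2]; ring
    obtain ⟨c, hc⟩ := ih q hqdeg
    refine ⟨fun j => if j = d + 1 then k else c j, ?_⟩
    rw [Finset.sum_range_succ]
    have hsum : ∑ j ∈ Finset.range (d + 1),
        Polynomial.C (if j = d + 1 then k else c j) * Polynomial.Chebyshev.T ℝ (j:ℤ)
        = ∑ j ∈ Finset.range (d + 1), Polynomial.C (c j) * Polynomial.Chebyshev.T ℝ (j:ℤ) := by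
      apply Finset.sum_congr rfl
      intro j hj
      rw [if_neg (Nat.ne_of_lt (Finset.mem_range.mp hj))]
    rw [hsum, ← hc]
    beta_reduce
    rw [if_pos rfl, hcast1, hq]
    ring

lemma chebCoeff_sum_mul (d : ℕ) (c : ℕ → ℝ) (f : ℝ → ℝ)
    (hf : ContinuousOn f (Set.Icc (-1:ℝ) 1)) (hm : Measurable f) (n : ℤ) :
    chebCoeff (fun x => (∑ j ∈ Finset.range (d + 1),
        c j * (Polynomial.Chebyshev.T ℝ (j:ℤ)).eval x) * f x) n
      = ∑ j ∈ Finset.range (d + 1),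
        c j * chebCoeff (fun x => (Polynomial.Chebyshev.T ℝ (j:ℤ)).eval x * f x) n := by
  unfold chebCoeff
  have hterm : ∀ j : ℕ, IntervalIntegrable
      (fun x => c j * ((Polynomial.Chebyshev.T ℝ (j:ℤ)).eval x * f x)
        * (Polynomial.Chebyshev.T ℝ n).eval x / Real.sqrt (1 - x ^ 2))
      MeasureTheory.volume (-1) 1 := by
    intro j
    apply iint_of_continuousOn
    · exact ((continuousOn_const.mul
        (((Polynomial.Chebyshev.T ℝ (j:ℤ)).continuous.continuousOn).mul hf)).mul
        ((Polynomial.Chebyshev.T ℝ n).continuous.continuousOn))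
    · exact ((measurable_const.mul
        ((Polynomial.Chebyshev.T ℝ (j:ℤ)).continuous.measurable.mul hm)).mul
        (Polynomial.Chebyshev.T ℝ n).continuous.measurable)
  have heq : (fun x => (∑ j ∈ Finset.range (d + 1),
        c j * (Polynomial.Chebyshev.T ℝ (j:ℤ)).eval x) * f x
        * (Polynomial.Chebyshev.T ℝ n).eval x / Real.sqrt (1 - x ^ 2))
      = fun x => ∑ j ∈ Finset.range (d + 1),
        c j * ((Polynomial.Chebyshev.T ℝ (j:ℤ)).eval x * f x)
          * (Polynomial.Chebyshev.T ℝ n).eval x / Real.sqrt (1 - x ^ 2) := by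
    funext x
    rw [Finset.sum_mul, Finset.sum_mul, Finset.sum_div]
    apply Finset.sum_congr rfl
    intro j _
    ring
  rw [heq, intervalIntegral.integral_finset_sum (fun j _ => hterm j), Finset.mul_sum]
  apply Finset.sum_congr rfl
  intro j _
  have : (fun x => c j * ((Polynomial.Chebyshev.T ℝ (j:ℤ)).eval x * f x)
        * (Polynomial.Chebyshev.T ℝ n).eval x / Real.sqrt (1 - x ^ 2))
      = fun x => c j * ((Polynomial.Chebyshev.T ℝ (j:ℤ)).eval x * f x
        * (Polynomial.Chebyshev.T ℝ n).eval x / Real.sqrt (1 - x ^ 2)) :=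
    funext fun x => by ring
  rw [this, intervalIntegral.integral_const_mul]
  ring


/-- the Chebyshev coefficients of a rational function
`y = a/b` with `b` nonvanishing on `[−1,1]` satisfy the constant-coefficient
recurrence `Σ_{i=−deg b}^{deg b} b_i · y_{n−i} = a_n`. -/
theorem stmt_3 (a b : Polynomial ℝ)
    (hb : ∀ x ∈ Set.Icc (-1 : ℝ) 1, b.eval x ≠ 0) :
    ∀ n : ℤ,
      ∑ i ∈ Finset.Icc (-(b.natDegree : ℤ)) (b.natDegree : ℤ),
          chebCoeff (fun x => b.eval x) i *
            chebCoeff (fun x => a.eval x / b.eval x) (n - i) =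
        chebCoeff (fun x => a.eval x) n := by
  intro n
  set d := b.natDegree with hd
  obtain ⟨c, hbc⟩ := cheb_expand d b le_rfl
  have heval : ∀ x : ℝ, b.eval x
      = ∑ j ∈ Finset.range (d + 1), c j * (Polynomial.Chebyshev.T ℝ (j:ℤ)).eval x := by
    intro x
    conv_lhs => rw [hbc]
    simp [Polynomial.eval_finset_sum]
  set y : ℝ → ℝ := fun x => a.eval x / b.eval x with hy
  have hycont : ContinuousOn y (Set.Icc (-1:ℝ) 1) :=
    (a.continuous.continuousOn).div (b.continuous.continuousOn) hb
  have hym : Measurable y := a.continuous.measurable.div b.continuous.measurable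
  -- RHS
  have hR : chebCoeff (fun x => a.eval x) n
      = ∑ j ∈ Finset.range (d + 1),
        c j * ((chebCoeff y (n + j) + chebCoeff y (n - j)) / 2) := by
    have h1 : chebCoeff (fun x => a.eval x) n
        = chebCoeff (fun x => (∑ j ∈ Finset.range (d + 1),
            c j * (Polynomial.Chebyshev.T ℝ (j:ℤ)).eval x) * y x) n := by
      apply chebCoeff_congr
      intro x hx
      show Polynomial.eval x a = (∑ j ∈ Finset.range (d + 1),
        c j * Polynomial.eval x (Polynomial.Chebyshev.T ℝ (j:ℤ))) * y x
      rw [← heval x]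
      show Polynomial.eval x a
        = Polynomial.eval x b * (Polynomial.eval x a / Polynomial.eval x b)
      rw [mul_comm, div_mul_cancel₀ _ (hb x hx)]
    rw [h1, chebCoeff_sum_mul d c y hycont hym n]
    apply Finset.sum_congr rfl
    intro j _
    rw [chebCoeff_T_mul y hycont hym (j:ℤ) n]
  -- b coefficients
  have hbcoeff : ∀ i : ℤ, chebCoeff (fun x => b.eval x) i
      = ∑ j ∈ Finset.range (d + 1),
        c j * (((if i + j = 0 then (1:ℝ) else 0) + (if i - j = 0 then (1:ℝ) else 0)) / 2) := by
    intro i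
    have h1 : chebCoeff (fun x => b.eval x) i
        = chebCoeff (fun x => (∑ j ∈ Finset.range (d + 1),
            c j * (Polynomial.Chebyshev.T ℝ (j:ℤ)).eval x) * (fun _ => (1:ℝ)) x) i := by
      apply chebCoeff_congr
      intro x _
      simp [heval x]
    rw [h1, chebCoeff_sum_mul d c (fun _ => 1) continuousOn_const measurable_const i]
    apply Finset.sum_congr rfl
    intro j _
    have e : (fun x : ℝ => (Polynomial.Chebyshev.T ℝ (j:ℤ)).eval x * (fun _ => (1:ℝ)) x)
        = fun x => (Polynomial.Chebyshev.T ℝ (j:ℤ)).eval x := funext fun x => mul_one _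
    rw [e, chebCoeff_T (j:ℤ) i]
  -- LHS
  rw [hR]
  have step1 : ∑ i ∈ Finset.Icc (-(d : ℤ)) (d : ℤ),
      chebCoeff (fun x => b.eval x) i * chebCoeff y (n - i)
      = ∑ i ∈ Finset.Icc (-(d : ℤ)) (d : ℤ), ∑ j ∈ Finset.range (d + 1),
        (c j / 2 * (if i = -(j:ℤ) then chebCoeff y (n - i) else 0)
          + c j / 2 * (if i = (j:ℤ) then chebCoeff y (n - i) else 0)) := by
    apply Finset.sum_congr rfl
    intro i _
    rw [hbcoeff i, Finset.sum_mul]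
    apply Finset.sum_congr rfl
    intro j _
    have e1 : (if i + (j:ℤ) = 0 then (1:ℝ) else 0) = if i = -(j:ℤ) then 1 else 0 := by
      by_cases h : i = -(j:ℤ)
      · rw [if_pos h, if_pos (by omega)]
      · rw [if_neg h, if_neg (by omega)]
    have e2 : (if i - (j:ℤ) = 0 then (1:ℝ) else 0) = if i = (j:ℤ) then 1 else 0 := by
      by_cases h : i = (j:ℤ)
      · rw [if_pos h, if_pos (by omega)]
      · rw [if_neg h, if_neg (by omega)]
    rw [e1, e2]
    split_ifs <;> ring
  rw [step1, Finset.sum_comm]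
  apply Finset.sum_congr rfl
  intro j hj
  have hjd : (j : ℤ) ≤ (d : ℤ) := by
    exact_mod_cast Nat.lt_succ_iff.mp (Finset.mem_range.mp hj)
  have hmem1 : -(j:ℤ) ∈ Finset.Icc (-(d : ℤ)) (d : ℤ) := by
    rw [Finset.mem_Icc]
    constructor <;> omega
  have hmem2 : (j:ℤ) ∈ Finset.Icc (-(d : ℤ)) (d : ℤ) := by
    rw [Finset.mem_Icc]
    constructor <;> omega
  rw [Finset.sum_add_distrib, ← Finset.mul_sum, ← Finset.mul_sum,
    Finset.sum_ite_eq' _ (-(j:ℤ)) (fun i => chebCoeff y (n - i)),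
    Finset.sum_ite_eq' _ ((j:ℤ)) (fun i => chebCoeff y (n - i)),
    if_pos hmem1, if_pos hmem2, sub_neg_eq_add]
  ring
end

section
/- Let t be a real number with 0 < t < 1, and let j ≥ 1 and d ≥ 0 be integers. Then Σ_{n=d+1}^{∞} binomial(n+j−1, j−1)·t^{n+j} ≤ (d+2)^{j−1}·t^{d+1}·Σ_{n=0}^{∞} binomial(n+j−1, j−1)·t^{n+j} = (d+2)^{j−1}·t^{d+j+1}/(1−t)^{j}, and in particular the left-hand series converges. -/
lemma choose_aux (k n d : ℕ) :
    (n + d + 1 + k).choose k ≤ (d + 2) ^ k * (n + k).choose k := by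
  induction k with
  | zero => simp
  | succ k ih =>
      apply Nat.le_of_mul_le_mul_right _ (Nat.succ_pos k)
      calc (n + d + 1 + (k + 1)).choose (k + 1) * (k + 1)
          = (n + d + 1 + k + 1) * (n + d + 1 + k).choose k := by
            rw [show n + d + 1 + (k + 1) = (n + d + 1 + k) + 1 by omega,
              ← Nat.add_one_mul_choose_eq]
        _ ≤ ((d + 2) * (n + k + 1)) * ((d + 2) ^ k * (n + k).choose k) :=
            Nat.mul_le_mul (by nlinarith) ih
        _ = (d + 2) ^ (k + 1) * ((n + k + 1) * (n + k).choose k) := by ring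
        _ = (d + 2) ^ (k + 1) * (n + (k + 1)).choose (k + 1) * (k + 1) := by
            rw [show n + (k + 1) = (n + k) + 1 by omega, mul_assoc, ← Nat.add_one_mul_choose_eq]

/-- for `0 < t < 1`, `j ≥ 1` and `d ≥ 0`, the series
`Σ_{n} binomial(n+j−1, j−1)·t^{n+j}` converges, its tail beyond index `d`
is at most `(d+2)^{j−1}·t^{d+1}` times the full sum, and the full sum times
`(d+2)^{j−1}·t^{d+1}` equals `(d+2)^{j−1}·t^{d+j+1}/(1−t)^{j}`. -/
theorem stmt_5 (t : ℝ) (ht0 : 0 < t) (ht1 : t < 1) (j d : ℕ) (hj : 1 ≤ j) :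
    Summable (fun n : ℕ => (Nat.choose (n + j - 1) (j - 1) : ℝ) * t ^ (n + j)) ∧
    (∑' n : ℕ, (Nat.choose ((n + d + 1) + j - 1) (j - 1) : ℝ) * t ^ ((n + d + 1) + j)) ≤
      (d + 2 : ℝ) ^ (j - 1) * t ^ (d + 1) *
        ∑' n : ℕ, (Nat.choose (n + j - 1) (j - 1) : ℝ) * t ^ (n + j) ∧
    (d + 2 : ℝ) ^ (j - 1) * t ^ (d + 1) *
        (∑' n : ℕ, (Nat.choose (n + j - 1) (j - 1) : ℝ) * t ^ (n + j)) =
      (d + 2 : ℝ) ^ (j - 1) * t ^ (d + j + 1) / (1 - t) ^ j := by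
  obtain ⟨k, rfl⟩ : ∃ k, j = k + 1 := ⟨j - 1, by omega⟩
  have e1 : ∀ n : ℕ, n + (k + 1) - 1 = n + k := fun n => by omega
  have e2 : k + 1 - 1 = k := by omega
  simp only [e1, e2]
  have hr : ‖t‖ < 1 := by rw [Real.norm_eq_abs, abs_of_pos ht0]; exact ht1
  have hgeo := hasSum_choose_mul_geometric_of_norm_lt_one (𝕜 := ℝ) k hr
  have hsum : HasSum (fun n : ℕ => (Nat.choose (n + k) k : ℝ) * t ^ (n + (k + 1)))
      (1 / (1 - t) ^ (k + 1) * t ^ (k + 1)) := by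
    convert hgeo.mul_right (t ^ (k + 1)) using 2 with n
    · rfl
    rw [pow_add]; ring
  have hS : Summable (fun n : ℕ => (Nat.choose (n + k) k : ℝ) * t ^ (n + (k + 1))) :=
    hsum.summable
  refine ⟨hS, ?_, ?_⟩
  · have hterm : ∀ n : ℕ,
        (Nat.choose (n + d + 1 + k) k : ℝ) * t ^ (n + d + 1 + (k + 1)) ≤
        (d + 2 : ℝ) ^ k * t ^ (d + 1) * ((Nat.choose (n + k) k : ℝ) * t ^ (n + (k + 1))) := by
      intro n
      have hc : (Nat.choose (n + d + 1 + k) k : ℝ) ≤ (d + 2 : ℝ) ^ k * Nat.choose (n + k) k := by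
        have := choose_aux k n d
        calc (Nat.choose (n + d + 1 + k) k : ℝ) ≤ ((d + 2) ^ k * (n + k).choose k : ℕ) := by
              exact_mod_cast Nat.cast_le.mpr this
          _ = (d + 2 : ℝ) ^ k * Nat.choose (n + k) k := by push_cast; ring
      have hp : t ^ (n + d + 1 + (k + 1)) = t ^ (d + 1) * t ^ (n + (k + 1)) := by
        rw [← pow_add]; ring_nf
      rw [hp]
      have h1 : (0:ℝ) ≤ t ^ (d + 1) * t ^ (n + (k + 1)) := by positivity
      calc (Nat.choose (n + d + 1 + k) k : ℝ) * (t ^ (d + 1) * t ^ (n + (k + 1)))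
          ≤ ((d + 2 : ℝ) ^ k * Nat.choose (n + k) k) * (t ^ (d + 1) * t ^ (n + (k + 1))) :=
            mul_le_mul_of_nonneg_right hc h1
        _ = (d + 2 : ℝ) ^ k * t ^ (d + 1) * ((Nat.choose (n + k) k : ℝ) * t ^ (n + (k + 1))) := by
            ring
    have hS2 : Summable (fun n : ℕ =>
        (d + 2 : ℝ) ^ k * t ^ (d + 1) * ((Nat.choose (n + k) k : ℝ) * t ^ (n + (k + 1)))) :=
      hS.mul_left _
    have hS1 : Summable (fun n : ℕ =>
        (Nat.choose (n + d + 1 + k) k : ℝ) * t ^ (n + d + 1 + (k + 1))) :=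
      Summable.of_nonneg_of_le (fun n => by positivity) hterm hS2
    calc (∑' n : ℕ, (Nat.choose (n + d + 1 + k) k : ℝ) * t ^ (n + d + 1 + (k + 1)))
        ≤ ∑' n : ℕ, (d + 2 : ℝ) ^ k * t ^ (d + 1) *
            ((Nat.choose (n + k) k : ℝ) * t ^ (n + (k + 1))) :=
          Summable.tsum_le_tsum hterm hS1 hS2
      _ = (d + 2 : ℝ) ^ k * t ^ (d + 1) *
            ∑' n : ℕ, (Nat.choose (n + k) k : ℝ) * t ^ (n + (k + 1)) := tsum_mul_left
  · rw [hsum.tsum_eq]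
    have h1t : (1 - t) ^ (k + 1) ≠ 0 := pow_ne_zero _ (by linarith)
    rw [show d + (k + 1) + 1 = (d + 1) + (k + 1) by omega, pow_add]
    field_simp
    ring
end

section
/- Let d ≥ 0 be an integer and let (y_n)_{n>d} be complex numbers. Suppose there is a finite family indexed by m of triples (h_m, ζ_m, j_m) with h_m ∈ ℂ, ζ_m ∈ ℂ, |ζ_m| > 1, and j_m ≥ 1 an integer, such that y_n = Σ_m binomial(n+j_m−1, j_m−1)·h_m·ζ_m^{−n−j_m} for all n > d. Then Σ_{n>d} |y_n| ≤ Σ_m |h_m|·(d+2)^{j_m−1}·(|ζ_m|−1)^{−j_m}·|ζ_m|^{−d−1}; in particular the series Σ_{n>d} y_n·T_n(x) converges absolutely and uniformly for x ∈ [−1,1] and satisfies sup_{x∈[−1,1]} |Σ_{n>d} y_n·T_n(x)| ≤ Σ_m |h_m|·(d+2)^{j_m−1}·(|ζ_m|−1)^{−j_m}·|ζ_m|^{−d−1}. -/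
open Polynomial Filter

lemma choose_le_aux (d : ℕ) : ∀ (k n : ℕ), (n + d + 1 + k).choose k ≤ (d + 2) ^ k * (n + k).choose k := by
  intro k
  induction k with
  | zero => simp
  | succ k ih =>
    intro n
    have key := Nat.add_one_mul_choose_eq (n + d + 1 + k) k
    have key2 := Nat.add_one_mul_choose_eq (n + k) k
    -- succ a * a.choose k = (a+1).choose (k+1) * (k+1)
    refine Nat.le_of_mul_le_mul_right ?_ (Nat.succ_pos k)
    have h1 : (n + d + 1 + (k+1)).choose (k+1) * (k+1) = (n + d + 1 + k + 1) * (n + d + 1 + k).choose k := by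
      rw [show n + d + 1 + (k+1) = (n+d+1+k)+1 from rfl]
      omega
    have h2 : ((d+2)^(k+1) * (n + (k+1)).choose (k+1)) * (k+1) = (d+2)^(k+1) * ((n + k + 1) * (n + k).choose k) := by
      have : (n + (k+1)).choose (k+1) * (k+1) = (n + k + 1) * (n + k).choose k := by
        rw [show n + (k+1) = (n+k)+1 from rfl]; omega
      rw [mul_assoc, this]
    rw [h1, h2]
    calc (n + d + 1 + k + 1) * (n + d + 1 + k).choose k
        ≤ (n + d + 1 + k + 1) * ((d+2)^k * (n + k).choose k) := Nat.mul_le_mul_left _ (ih n)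
      _ ≤ ((d+2) * (n + k + 1)) * ((d+2)^k * (n + k).choose k) := by
          apply Nat.mul_le_mul_right
          nlinarith
      _ = (d+2)^(k+1) * ((n + k + 1) * (n + k).choose k) := by ring

lemma cheb_abs_le (x : ℝ) (hx : x ∈ Set.Icc (-1 : ℝ) 1) (k : ℤ) :
    |(Polynomial.Chebyshev.T ℝ k).eval x| ≤ 1 := by
  have : x = Real.cos (Real.arccos x) := (Real.cos_arccos hx.1 hx.2).symm
  rw [this, Polynomial.Chebyshev.T_real_cos]
  exact Real.abs_cos_le_one _

lemma stmt6_core {ι : Type*} [Fintype ι] (d : ℕ) (y : ℕ → ℂ)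
    (h : ι → ℂ) (ζ : ι → ℂ) (jf : ι → ℕ)
    (hζ : ∀ m, 1 < ‖ζ m‖) (hj : ∀ m, 1 ≤ jf m)
    (hy : ∀ n : ℕ, d < n →
      y n = ∑ m : ι, (Nat.choose (n + jf m - 1) (jf m - 1) : ℂ) * h m *
        ζ m ^ (-(n : ℤ) - (jf m : ℤ))) :
    Summable (fun n : ℕ => ‖y (n + d + 1)‖) ∧
    (∑' n : ℕ, ‖y (n + d + 1)‖) ≤ ∑ m : ι, ‖h m‖ * (d + 2 : ℝ) ^ (jf m - 1) * ((‖ζ m‖ - 1) ^ jf m)⁻¹ *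
    ‖ζ m‖ ^ (-(d : ℤ) - 1) := by
  set g : ι → ℕ → ℝ := fun m n =>
    (‖h m‖ * (d + 2 : ℝ) ^ (jf m - 1) * (‖ζ m‖⁻¹) ^ (d + 1 + jf m)) *
      (((n + (jf m - 1)).choose (jf m - 1) : ℝ) * (‖ζ m‖⁻¹) ^ n) with hg
  have hr0 : ∀ m, (0:ℝ) < ‖ζ m‖ := fun m => lt_trans one_pos (hζ m)
  have hrne : ∀ m, (‖ζ m‖ : ℝ) ≠ 0 := fun m => ne_of_gt (hr0 m)
  have hr1ne : ∀ m, ‖ζ m‖ - 1 ≠ 0 := fun m => ne_of_gt (by linarith [hζ m])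
  have hxlt : ∀ m, ‖(‖ζ m‖⁻¹ : ℝ)‖ < 1 := by
    intro m
    rw [Real.norm_eq_abs, abs_of_pos (inv_pos.mpr (hr0 m))]
    exact inv_lt_one_of_one_lt₀ (hζ m)
  have hgS : ∀ m, HasSum (g m)
      (‖h m‖ * (d + 2 : ℝ) ^ (jf m - 1) * ((‖ζ m‖ - 1) ^ jf m)⁻¹ * ‖ζ m‖ ^ (-(d : ℤ) - 1)) := by
    intro m
    have H := hasSum_choose_mul_geometric_of_norm_lt_one (𝕜 := ℝ) (jf m - 1) (hxlt m)
    have H2 := H.mul_left (‖h m‖ * (d + 2 : ℝ) ^ (jf m - 1) * (‖ζ m‖⁻¹) ^ (d + 1 + jf m))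
    convert H2 using 1
    · rfl
    have hk1 : jf m - 1 + 1 = jf m := Nat.succ_pred_eq_of_pos (hj m)
    rw [hk1]
    have hz : (‖ζ m‖ : ℝ) ^ (-(d : ℤ) - 1) = ((‖ζ m‖) ^ (d+1 : ℕ))⁻¹ := by
      rw [show (-(d:ℤ) - 1) = -((d+1 : ℕ) : ℤ) by push_cast; ring, zpow_neg, zpow_natCast]
    rw [hz]
    have h1x : 1 - (‖ζ m‖)⁻¹ = (‖ζ m‖ - 1) * (‖ζ m‖)⁻¹ := by
      rw [sub_mul, mul_inv_cancel₀ (hrne m), one_mul]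
    have key : (‖ζ m‖⁻¹) ^ (d + 1 + jf m) * (1 / (1 - ‖ζ m‖⁻¹) ^ (jf m)) =
        ((‖ζ m‖ - 1) ^ jf m)⁻¹ * (‖ζ m‖ ^ (d+1))⁻¹ := by
      rw [h1x]
      rw [show ((‖ζ m‖:ℝ)^(d+1))⁻¹ = (‖ζ m‖⁻¹)^(d+1) from (inv_pow _ _).symm,
        pow_add, mul_pow, one_div, mul_inv]
      have hc : (‖ζ m‖⁻¹ : ℝ) ^ (jf m) * ((‖ζ m‖⁻¹) ^ (jf m))⁻¹ = 1 :=
        mul_inv_cancel₀ (pow_ne_zero _ (inv_ne_zero (hrne m)))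
      linear_combination (((‖ζ m‖ - 1) ^ jf m)⁻¹ * (‖ζ m‖⁻¹) ^ (d+1)) * hc
    calc ‖h m‖ * (d + 2 : ℝ) ^ (jf m - 1) * ((‖ζ m‖ - 1) ^ jf m)⁻¹ * (‖ζ m‖ ^ (d+1 : ℕ))⁻¹
        = ‖h m‖ * (d + 2 : ℝ) ^ (jf m - 1) * (((‖ζ m‖ - 1) ^ jf m)⁻¹ * (‖ζ m‖ ^ (d+1))⁻¹) := by
          ring
      _ = ‖h m‖ * (d + 2 : ℝ) ^ (jf m - 1) *
            ((‖ζ m‖⁻¹) ^ (d + 1 + jf m) * (1 / (1 - ‖ζ m‖⁻¹) ^ (jf m))) := by rw [key]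
      _ = ‖h m‖ * (d + 2 : ℝ) ^ (jf m - 1) * (‖ζ m‖⁻¹) ^ (d + 1 + jf m) *
            (1 / (1 - ‖ζ m‖⁻¹) ^ (jf m)) := by ring
  have hbound : ∀ n : ℕ, ‖y (n + d + 1)‖ ≤ ∑ m : ι, g m n := by
    intro n
    rw [hy (n + d + 1) (by omega)]
    refine (norm_sum_le _ _).trans (Finset.sum_le_sum fun m _ => ?_)
    rw [norm_mul, norm_mul, norm_zpow, Complex.norm_natCast]
    have hidx : n + d + 1 + jf m - 1 = n + d + 1 + (jf m - 1) := by have := hj m; omega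
    have hzp : ‖ζ m‖ ^ (-((n+d+1 : ℕ) : ℤ) - (jf m : ℤ)) = ((‖ζ m‖)⁻¹) ^ (n + d + 1 + jf m) := by
      rw [show (-((n+d+1 : ℕ):ℤ) - (jf m : ℤ)) = -((n + d + 1 + jf m : ℕ) : ℤ) by push_cast; ring,
        zpow_neg, zpow_natCast, inv_pow]
    rw [hzp, hidx]
    have hC : ((n + d + 1 + (jf m - 1)).choose (jf m - 1) : ℝ) ≤
        (d + 2 : ℝ) ^ (jf m - 1) * ((n + (jf m - 1)).choose (jf m - 1) : ℝ) := by
      have := choose_le_aux d (jf m - 1) n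
      exact_mod_cast this
    have hxpow : ((‖ζ m‖)⁻¹ : ℝ) ^ (n + d + 1 + jf m) = (‖ζ m‖⁻¹) ^ (d + 1 + jf m) * (‖ζ m‖⁻¹) ^ n := by
      rw [← pow_add]; ring_nf
    rw [hxpow, hg]
    have hnn : (0:ℝ) ≤ ‖h m‖ * ((‖ζ m‖⁻¹) ^ (d + 1 + jf m) * (‖ζ m‖⁻¹) ^ n) :=
      mul_nonneg (norm_nonneg _) (mul_nonneg (by positivity) (by positivity))
    calc ((n + d + 1 + (jf m - 1)).choose (jf m - 1) : ℝ) * ‖h m‖ *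
          ((‖ζ m‖⁻¹) ^ (d + 1 + jf m) * (‖ζ m‖⁻¹) ^ n)
        = (‖h m‖ * ((‖ζ m‖⁻¹) ^ (d + 1 + jf m) * (‖ζ m‖⁻¹) ^ n)) *
            ((n + d + 1 + (jf m - 1)).choose (jf m - 1) : ℝ) := by ring
      _ ≤ (‖h m‖ * ((‖ζ m‖⁻¹) ^ (d + 1 + jf m) * (‖ζ m‖⁻¹) ^ n)) *
            ((d + 2 : ℝ) ^ (jf m - 1) * ((n + (jf m - 1)).choose (jf m - 1) : ℝ)) :=
          mul_le_mul_of_nonneg_left hC hnn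
      _ = (‖h m‖ * (d + 2 : ℝ) ^ (jf m - 1) * (‖ζ m‖⁻¹) ^ (d + 1 + jf m)) *
            (((n + (jf m - 1)).choose (jf m - 1) : ℝ) * (‖ζ m‖⁻¹) ^ n) := by ring
  have hgsum : ∀ m, Summable (g m) := fun m => (hgS m).summable
  have hS : Summable (fun n => ∑ m : ι, g m n) := summable_sum (fun m _ => hgsum m)
  have h1 : Summable (fun n : ℕ => ‖y (n + d + 1)‖) :=
    Summable.of_nonneg_of_le (fun n => norm_nonneg _) hbound hS
  refine ⟨h1, ?_⟩
  calc (∑' n : ℕ, ‖y (n + d + 1)‖) ≤ ∑' n, ∑ m : ι, g m n := Summable.tsum_le_tsum hbound h1 hS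
    _ = ∑ m : ι, ∑' n, g m n := Summable.tsum_finsetSum (fun m _ => hgsum m)
    _ = _ := Finset.sum_congr rfl fun m _ => (hgS m).tsum_eq


/-- The bound `Σ_m |h_m|·(d+2)^{j_m−1}·(|ζ_m|−1)^{−j_m}·|ζ_m|^{−d−1}`. -/
noncomputable def tailBound {ι : Type*} [Fintype ι]
    (h : ι → ℂ) (ζ : ι → ℂ) (jf : ι → ℕ) (d : ℕ) : ℝ :=
  ∑ m : ι, ‖h m‖ * (d + 2 : ℝ) ^ (jf m - 1) * ((‖ζ m‖ - 1) ^ jf m)⁻¹ *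
    ‖ζ m‖ ^ (-(d : ℤ) - 1)

/-- if `y_n = Σ_m binom(n+j_m−1, j_m−1)·h_m·ζ_m^{−n−j_m}` for `n > d`,
with `|ζ_m| > 1` and `j_m ≥ 1`, then `Σ_{n>d} |y_n|` is bounded by `tailBound`,
the series `Σ_{n>d} y_n·T_n(x)` converges absolutely and uniformly on `[−1,1]`,
and its sup over `[−1,1]` is bounded by the same quantity. -/
theorem stmt_6 {ι : Type*} [Fintype ι] (d : ℕ) (y : ℕ → ℂ)
    (h : ι → ℂ) (ζ : ι → ℂ) (jf : ι → ℕ)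
    (hζ : ∀ m, 1 < ‖ζ m‖) (hj : ∀ m, 1 ≤ jf m)
    (hy : ∀ n : ℕ, d < n →
      y n = ∑ m : ι, (Nat.choose (n + jf m - 1) (jf m - 1) : ℂ) * h m *
        ζ m ^ (-(n : ℤ) - (jf m : ℤ))) :
    Summable (fun n : ℕ => ‖y (n + d + 1)‖) ∧
    (∑' n : ℕ, ‖y (n + d + 1)‖) ≤ tailBound h ζ jf d ∧
    (∀ x ∈ Set.Icc (-1 : ℝ) 1,
      Summable (fun n : ℕ =>
        ‖y (n + d + 1) *
          (Complex.ofReal ((Polynomial.Chebyshev.T ℝ ((n : ℤ) + d + 1)).eval x))‖)) ∧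
    TendstoUniformlyOn
      (fun (N : ℕ) (x : ℝ) => ∑ n ∈ Finset.range N,
        y (n + d + 1) * (Complex.ofReal ((Polynomial.Chebyshev.T ℝ ((n : ℤ) + d + 1)).eval x)))
      (fun x : ℝ => ∑' n : ℕ,
        y (n + d + 1) * (Complex.ofReal ((Polynomial.Chebyshev.T ℝ ((n : ℤ) + d + 1)).eval x)))
      atTop (Set.Icc (-1 : ℝ) 1) ∧
    ∀ x ∈ Set.Icc (-1 : ℝ) 1,
      ‖∑' n : ℕ, y (n + d + 1) *
          (Complex.ofReal ((Polynomial.Chebyshev.T ℝ ((n : ℤ) + d + 1)).eval x))‖ ≤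
        tailBound h ζ jf d := by
  obtain ⟨h1, h2⟩ := stmt6_core d y h ζ jf hζ hj hy
  have hTle : ∀ (n : ℕ) (x : ℝ), x ∈ Set.Icc (-1 : ℝ) 1 →
      ‖y (n + d + 1) *
        (Complex.ofReal ((Polynomial.Chebyshev.T ℝ ((n : ℤ) + d + 1)).eval x))‖ ≤
      ‖y (n + d + 1)‖ := by
    intro n x hx
    rw [norm_mul, Complex.norm_real, Real.norm_eq_abs]
    calc ‖y (n + d + 1)‖ * |(Polynomial.Chebyshev.T ℝ ((n : ℤ) + d + 1)).eval x|
        ≤ ‖y (n + d + 1)‖ * 1 :=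
          mul_le_mul_of_nonneg_left (cheb_abs_le x hx _) (norm_nonneg _)
      _ = ‖y (n + d + 1)‖ := mul_one _
  have h3 : ∀ x ∈ Set.Icc (-1 : ℝ) 1,
      Summable (fun n : ℕ =>
        ‖y (n + d + 1) *
          (Complex.ofReal ((Polynomial.Chebyshev.T ℝ ((n : ℤ) + d + 1)).eval x))‖) := by
    intro x hx
    exact Summable.of_nonneg_of_le (fun n => norm_nonneg _) (fun n => hTle n x hx) h1
  refine ⟨h1, h2, h3, tendstoUniformlyOn_tsum_nat h1 hTle, ?_⟩
  intro x hx
  calc ‖∑' n : ℕ, y (n + d + 1) *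
          (Complex.ofReal ((Polynomial.Chebyshev.T ℝ ((n : ℤ) + d + 1)).eval x))‖
      ≤ ∑' n : ℕ, ‖y (n + d + 1) *
          (Complex.ofReal ((Polynomial.Chebyshev.T ℝ ((n : ℤ) + d + 1)).eval x))‖ :=
        norm_tsum_le_tsum_norm (h3 x hx)
    _ ≤ ∑' n : ℕ, ‖y (n + d + 1)‖ := Summable.tsum_le_tsum (fun n => hTle n x hx) (h3 x hx) h1
    _ ≤ tailBound h ζ jf d := h2
end

section
/- Let r ≥ 1 be an integer, let α_0, α_1, …, α_r be real polynomials, and let y : ℝ → ℝ be r times continuously differentiable on an open set containing [−1,1]. Suppose that Σ_{k=0}^{r} (α_k·y)^{(k)}(x) = 0 for all x ∈ [−1,1], where (α_k·y)^{(k)} denotes the k-th derivative of the product function x ↦ α_k(x)·y(x). Then for all x ∈ [−1,1], α_r(x)·y(x) = g(x) + ∫_0^x K(x,t)·y(t) dt, where K(x,t) = −Σ_{k=0}^{r−1} ((x−t)^k / k!)·α_{r−1−k}(t), and g(x) = Σ_{k=0}^{r−1} ( Σ_{m=r−k}^{r} (α_m·y)^{(m−(r−k))}(0) ) · x^k / k!.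 -/
open Polynomial intervalIntegral

lemma my_iteratedDerivWithin_of_isOpen {f : ℝ → ℝ} {s : Set ℝ} (n : ℕ) (hs : IsOpen s) :
    Set.EqOn (iteratedDerivWithin n f s) (iteratedDeriv n f) s := by
  intro x hx
  simp only [iteratedDerivWithin, iteratedDeriv, iteratedFDerivWithin_of_isOpen n hs hx]

lemma my_smooth_facts {n : ℕ} {h : ℝ → ℝ} {U : Set ℝ} (hU : IsOpen U)
    (hh : ContDiffOn ℝ n h U) :
    (∀ i, i ≤ n → ContinuousOn (iteratedDeriv i h) U) ∧
    (∀ i, i < n → ∀ t ∈ U, HasDerivAt (iteratedDeriv i h) (iteratedDeriv (i + 1) h t) t) := by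
  constructor
  · intro i hi
    exact (hh.continuousOn_iteratedDerivWithin (by exact_mod_cast hi) hU.uniqueDiffOn).congr
      (my_iteratedDerivWithin_of_isOpen i hU).symm
  · intro i hi t ht
    have hdo : DifferentiableOn ℝ (iteratedDeriv i h) U :=
      (hh.differentiableOn_iteratedDerivWithin (by exact_mod_cast hi) hU.uniqueDiffOn).congr
        (my_iteratedDerivWithin_of_isOpen i hU).symm
    have := (hdo.differentiableAt (hU.mem_nhds ht)).hasDerivAt
    rwa [← iteratedDeriv_succ] at this

lemma my_ibp_step (x : ℝ) (g g' : ℝ → ℝ) (n : ℕ)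
    (hg : ∀ t ∈ Set.uIcc (0:ℝ) x, HasDerivAt g (g' t) t)
    (hg' : ContinuousOn g' (Set.uIcc (0:ℝ) x)) :
    (∫ t in (0:ℝ)..x, (x - t) ^ (n+1) / (Nat.factorial (n+1) : ℝ) * g' t) =
      -(g 0 * x ^ (n+1) / (Nat.factorial (n+1) : ℝ)) +
        ∫ t in (0:ℝ)..x, (x - t) ^ n / (Nat.factorial n : ℝ) * g t := by
  have hu : ∀ t ∈ Set.uIcc (0:ℝ) x,
      HasDerivAt (fun t => (x - t) ^ (n+1) / (Nat.factorial (n+1) : ℝ))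
        (-((x - t) ^ n / (Nat.factorial n : ℝ))) t := by
    intro t _
    have h1 : HasDerivAt (fun t : ℝ => x - t) (-1) t := by
      simpa using (hasDerivAt_id t).const_sub x
    have h2 := (h1.pow (n+1)).div_const (Nat.factorial (n+1) : ℝ)
    refine h2.congr_deriv ?_
    have hf : (Nat.factorial (n+1) : ℝ) = (n+1) * Nat.factorial n := by
      rw [Nat.factorial_succ]; push_cast; ring
    rw [hf]
    rw [Nat.add_sub_cancel]; push_cast
    have h0 : (Nat.factorial n : ℝ) ≠ 0 := by exact_mod_cast Nat.factorial_ne_zero n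
    field_simp
  have hcontu : ContinuousOn (fun t => -((x - t) ^ n / (Nat.factorial n : ℝ)))
      (Set.uIcc (0:ℝ) x) := by fun_prop
  have hiu : IntervalIntegrable (fun t => -((x - t) ^ n / (Nat.factorial n : ℝ)))
      MeasureTheory.volume 0 x := hcontu.intervalIntegrable
  have hig : IntervalIntegrable g' MeasureTheory.volume 0 x := hg'.intervalIntegrable
  have key := intervalIntegral.integral_mul_deriv_eq_deriv_mul hu hg hiu hig
  rw [key]
  have hxx : x - x = 0 := sub_self x
  rw [hxx]
  simp only [zero_pow (Nat.succ_ne_zero n), zero_div, zero_mul, neg_mul,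
    intervalIntegral.integral_neg]
  ring

lemma my_taylor_int (h : ℝ → ℝ) (n : ℕ) (x : ℝ)
    (hd : ∀ i < n + 1, ∀ t ∈ Set.uIcc (0:ℝ) x,
      HasDerivAt (iteratedDeriv i h) (iteratedDeriv (i + 1) h t) t)
    (hc : ∀ i ≤ n + 1, ContinuousOn (iteratedDeriv i h) (Set.uIcc (0:ℝ) x)) :
    h x = (∑ k ∈ Finset.range (n + 1), iteratedDeriv k h 0 * x ^ k / (Nat.factorial k : ℝ)) +
      ∫ t in (0:ℝ)..x, (x - t) ^ n / (Nat.factorial n : ℝ) * iteratedDeriv (n + 1) h t := by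
  induction n with
  | zero =>
    have hftc : (∫ t in (0:ℝ)..x, iteratedDeriv 1 h t) = h x - h 0 := by
      apply intervalIntegral.integral_eq_sub_of_hasDerivAt
      · intro t ht
        simpa [iteratedDeriv_zero] using hd 0 (by norm_num) t ht
      · exact (hc 1 (by norm_num)).intervalIntegrable
    rw [show (∫ t in (0:ℝ)..x, (x - t) ^ 0 / (Nat.factorial 0 : ℝ) * iteratedDeriv (0+1) h t)
        = ∫ t in (0:ℝ)..x, iteratedDeriv 1 h t by
      apply intervalIntegral.integral_congr; intro t _; simp, hftc]
    simp [Finset.sum_range_one, iteratedDeriv_zero]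
  | succ n ih =>
    have hIH := ih (fun i hi => hd i (by omega)) (fun i hi => hc i (by omega))
    have hibp := my_ibp_step x (iteratedDeriv (n + 1) h) (iteratedDeriv (n + 2) h) n
      (fun t ht => hd (n + 1) (by omega) t ht) (hc (n + 2) (by omega))
    rw [Finset.sum_range_succ, hibp, hIH]
    ring

lemma my_shift_int (h : ℝ → ℝ) (x : ℝ) (j : ℕ) :
    ∀ s : ℕ, j ≤ s →
    (∀ i < j, ∀ t ∈ Set.uIcc (0:ℝ) x,
      HasDerivAt (iteratedDeriv i h) (iteratedDeriv (i + 1) h t) t) →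
    (∀ i ≤ j, ContinuousOn (iteratedDeriv i h) (Set.uIcc (0:ℝ) x)) →
    (∫ t in (0:ℝ)..x, (x - t) ^ s / (Nat.factorial s : ℝ) * iteratedDeriv j h t) =
      -(∑ i ∈ Finset.range j,
          iteratedDeriv i h 0 * x ^ (s - j + i + 1) / (Nat.factorial (s - j + i + 1) : ℝ)) +
        ∫ t in (0:ℝ)..x, (x - t) ^ (s - j) / (Nat.factorial (s - j) : ℝ) * h t := by
  induction j with
  | zero => intro s _ _ _; simp [iteratedDeriv_zero]
  | succ j ih =>
    intro s hjs hd hc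
    obtain ⟨u, rfl⟩ : ∃ u, s = u + 1 := ⟨s - 1, by omega⟩
    have hibp := my_ibp_step x (iteratedDeriv j h) (iteratedDeriv (j + 1) h) u
      (fun t ht => hd j (by omega) t ht) (hc (j + 1) le_rfl)
    rw [hibp, ih u (by omega) (fun i hi => hd i (by omega)) (fun i hi => hc i (by omega))]
    rw [Finset.sum_range_succ]
    have e1 : u + 1 - (j + 1) = u - j := by omega
    have e2 : u - j + j + 1 = u + 1 := by omega
    rw [e1, e2]
    ring

lemma my_poly_contDiff (p : Polynomial ℝ) (n : ℕ∞) : ContDiff ℝ n fun x => p.eval x := by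
  induction p using Polynomial.induction_on' with
  | add p q hp hq => simpa [Polynomial.eval_add] using hp.add hq
  | monomial k a =>
    simpa [Polynomial.eval_monomial] using (contDiff_const (c := a)).mul (contDiff_id.pow k)

/-- a solution on `[−1,1]` of the differential equation
`Σ_{k=0}^{r} (α_k·y)^{(k)} = 0`, with `y` of class `C^r` on an open set containing
`[−1,1]`, satisfies the Volterra integral equation
`α_r(x)·y(x) = g(x) + ∫_0^x K(x,t)·y(t) dt`. -/
theorem stmt_7 (r : ℕ) (hr : 1 ≤ r) (α : ℕ → Polynomial ℝ) (y : ℝ → ℝ)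
    (U : Set ℝ) (hU : IsOpen U) (hIccU : Set.Icc (-1 : ℝ) 1 ⊆ U)
    (hy : ContDiffOn ℝ r y U)
    (hode : ∀ x ∈ Set.Icc (-1 : ℝ) 1,
      ∑ k ∈ Finset.range (r + 1),
        iteratedDeriv k (fun t => (α k).eval t * y t) x = 0) :
    ∀ x ∈ Set.Icc (-1 : ℝ) 1,
      (α r).eval x * y x =
        (∑ k ∈ Finset.range r,
            (∑ m ∈ Finset.Icc (r - k) r,
              iteratedDeriv (m - (r - k)) (fun t => (α m).eval t * y t) 0) *
              x ^ k / (Nat.factorial k : ℝ)) +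
          ∫ t in (0 : ℝ)..x,
            (-(∑ k ∈ Finset.range r,
                ((x - t) ^ k / (Nat.factorial k : ℝ)) * (α (r - 1 - k)).eval t)) * y t := by
  obtain ⟨s, rfl⟩ : ∃ s, r = s + 1 := ⟨r - 1, by omega⟩
  intro x hx
  have hsub : Set.uIcc (0:ℝ) x ⊆ Set.Icc (-1:ℝ) 1 :=
    Set.ordConnected_Icc.uIcc_subset (by norm_num) hx
  have hU' : Set.uIcc (0:ℝ) x ⊆ U := hsub.trans hIccU
  have hfC : ∀ m : ℕ, ContDiffOn ℝ (s + 1 : ℕ) (fun t => eval t (α m) * y t) U :=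
    fun m => ((my_poly_contDiff (α m) ((s+1 : ℕ) : ℕ∞)).contDiffOn).mul hy
  have hsf := fun m => my_smooth_facts hU (hfC m)
  have hcont : ∀ m, ∀ i ≤ s + 1,
      ContinuousOn (iteratedDeriv i fun t => eval t (α m) * y t) (Set.uIcc (0:ℝ) x) :=
    fun m i hi => ((hsf m).1 i hi).mono hU'
  have hder : ∀ m, ∀ i < s + 1, ∀ t ∈ Set.uIcc (0:ℝ) x,
      HasDerivAt (iteratedDeriv i fun t => eval t (α m) * y t)
        (iteratedDeriv (i+1) (fun t => eval t (α m) * y t) t) t :=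
    fun m i hi t ht => (hsf m).2 i hi t (hU' ht)
  have hycont : ContinuousOn y (Set.uIcc (0:ℝ) x) := hy.continuousOn.mono hU'
  have hfcont : ∀ m : ℕ, ContinuousOn (fun t => eval t (α m) * y t) (Set.uIcc (0:ℝ) x) :=
    fun m => ((α m).continuous.continuousOn).mul hycont
  have hT' : eval x (α (s+1)) * y x =
      (∑ k ∈ Finset.range (s + 1),
          iteratedDeriv k (fun t => eval t (α (s+1)) * y t) 0 * x ^ k / (Nat.factorial k : ℝ)) +
        ∫ t in (0:ℝ)..x, (x - t) ^ s / (Nat.factorial s : ℝ) *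
          iteratedDeriv (s + 1) (fun t => eval t (α (s+1)) * y t) t :=
    my_taylor_int (fun t => eval t (α (s+1)) * y t) s x (hder (s+1)) (hcont (s+1))
  have hodef : ∀ t ∈ Set.uIcc (0:ℝ) x,
      iteratedDeriv (s+1) (fun t => eval t (α (s+1)) * y t) t
        = -∑ m ∈ Finset.range (s+1), iteratedDeriv m (fun t => eval t (α m) * y t) t := by
    intro t ht
    have h0 := hode t (hsub ht)
    rw [Finset.sum_range_succ] at h0
    linarith
  have hIntm : ∀ m ∈ Finset.range (s+1), IntervalIntegrable
      (fun t => (x - t) ^ s / (Nat.factorial s : ℝ) *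
        iteratedDeriv m (fun t => eval t (α m) * y t) t) MeasureTheory.volume 0 x := by
    intro m hm
    rw [Finset.mem_range] at hm
    exact ((Continuous.continuousOn (by fun_prop)).mul (hcont m m (by omega))).intervalIntegrable
  have hint1 : (∫ t in (0:ℝ)..x, (x - t) ^ s / (Nat.factorial s : ℝ) *
        iteratedDeriv (s+1) (fun t => eval t (α (s+1)) * y t) t)
      = -∑ m ∈ Finset.range (s+1), ∫ t in (0:ℝ)..x,
          (x - t) ^ s / (Nat.factorial s : ℝ) *
            iteratedDeriv m (fun t => eval t (α m) * y t) t := by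
    rw [← intervalIntegral.integral_finset_sum hIntm, ← intervalIntegral.integral_neg]
    apply intervalIntegral.integral_congr
    intro t ht
    simp only [hodef t ht, mul_neg, Finset.mul_sum]
  have hshift : ∀ m ∈ Finset.range (s+1),
      (∫ t in (0:ℝ)..x, (x - t) ^ s / (Nat.factorial s : ℝ) *
        iteratedDeriv m (fun t => eval t (α m) * y t) t)
      = -(∑ i ∈ Finset.range m, iteratedDeriv i (fun t => eval t (α m) * y t) 0 *
            x ^ (s - m + i + 1) / (Nat.factorial (s - m + i + 1) : ℝ))
        + ∫ t in (0:ℝ)..x, (x - t) ^ (s - m) / (Nat.factorial (s - m) : ℝ) *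
            (eval t (α m) * y t) := by
    intro m hm
    rw [Finset.mem_range] at hm
    exact my_shift_int (fun t => eval t (α m) * y t) x m s (by omega)
      (fun i hi => hder m i (by omega)) (fun i hi => hcont m i (by omega))
  have hrefl : ∀ t : ℝ,
      (∑ m ∈ Finset.range (s+1),
        (x - t) ^ (s - m) / (Nat.factorial (s - m) : ℝ) * (eval t (α m) * y t))
      = ∑ k ∈ Finset.range (s+1),
          ((x - t) ^ k / (Nat.factorial k : ℝ)) * eval t (α (s + 1 - 1 - k)) * y t := by
    intro t
    rw [← Finset.sum_range_reflect
      (fun k => ((x - t) ^ k / (Nat.factorial k : ℝ)) * eval t (α (s + 1 - 1 - k)) * y t) (s+1)]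
    apply Finset.sum_congr rfl
    intro j hj
    rw [Finset.mem_range] at hj
    rw [show s + 1 - 1 - j = s - j by omega]
    rw [show s + 1 - 1 - (s - j) = j by omega]
    ring
  have hJ : (∫ t in (0:ℝ)..x, (-(∑ k ∈ Finset.range (s+1),
        ((x - t) ^ k / (Nat.factorial k : ℝ)) * eval t (α (s + 1 - 1 - k)))) * y t)
      = -∑ m ∈ Finset.range (s+1), ∫ t in (0:ℝ)..x,
          (x - t) ^ (s - m) / (Nat.factorial (s - m) : ℝ) * (eval t (α m) * y t) := by
    have hInt2 : ∀ m ∈ Finset.range (s+1), IntervalIntegrable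
        (fun t => (x - t) ^ (s - m) / (Nat.factorial (s - m) : ℝ) * (eval t (α m) * y t))
        MeasureTheory.volume 0 x :=
      fun m _ => ((Continuous.continuousOn (by fun_prop)).mul (hfcont m)).intervalIntegrable
    rw [← intervalIntegral.integral_finset_sum hInt2, ← intervalIntegral.integral_neg]
    apply intervalIntegral.integral_congr
    intro t ht
    simp only [neg_mul, Finset.sum_mul, ← hrefl t]
  have hGsplit : (∑ k ∈ Finset.range (s+1),
        (∑ m ∈ Finset.Icc (s + 1 - k) (s + 1),
          iteratedDeriv (m - (s + 1 - k)) (fun t => eval t (α m) * y t) 0) * x ^ k /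
          (Nat.factorial k : ℝ))
      = (∑ k ∈ Finset.range (s+1),
          iteratedDeriv k (fun t => eval t (α (s+1)) * y t) 0 * x ^ k / (Nat.factorial k : ℝ))
        + ∑ m ∈ Finset.range (s+1), ∑ i ∈ Finset.range m,
            iteratedDeriv i (fun t => eval t (α m) * y t) 0 * x ^ (s - m + i + 1) /
              (Nat.factorial (s - m + i + 1) : ℝ) := by
    have hsplit : ∀ k ∈ Finset.range (s+1),
        (∑ m ∈ Finset.Icc (s + 1 - k) (s + 1),
          iteratedDeriv (m - (s + 1 - k)) (fun t => eval t (α m) * y t) 0) * x ^ k /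
          (Nat.factorial k : ℝ)
        = (∑ m ∈ Finset.Icc (s + 1 - k) s,
            iteratedDeriv (m - (s + 1 - k)) (fun t => eval t (α m) * y t) 0) * x ^ k /
            (Nat.factorial k : ℝ)
          + iteratedDeriv k (fun t => eval t (α (s+1)) * y t) 0 * x ^ k /
              (Nat.factorial k : ℝ) := by
      intro k hk
      rw [Finset.mem_range] at hk
      rw [Finset.sum_Icc_succ_top (by omega)]
      rw [show s + 1 - (s + 1 - k) = k by omega]
      ring
    rw [Finset.sum_congr rfl hsplit, Finset.sum_add_distrib, add_comm]
    congr 1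
    simp only [Finset.sum_mul, Finset.sum_div]
    rw [Finset.sum_comm' (t' := Finset.range (s+1))
      (s' := fun m => Finset.Icc (s + 1 - m) s)
      (by intro k m; simp only [Finset.mem_range, Finset.mem_Icc]; omega)]
    apply Finset.sum_congr rfl
    intro m hm
    rw [Finset.mem_range] at hm
    apply Finset.sum_nbij' (i := fun k => m - (s + 1 - k)) (j := fun i => s - m + i + 1)
    · intro k hk; simp only [Finset.mem_Icc, Finset.mem_range] at *; omega
    · intro i hi; simp only [Finset.mem_Icc, Finset.mem_range] at *; omega
    · intro k hk; simp only [Finset.mem_Icc] at hk; omega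
    · intro i hi; simp only [Finset.mem_range] at hi; omega
    · intro k hk
      simp only [Finset.mem_Icc] at hk
      rw [show s - m + (m - (s + 1 - k)) + 1 = k by omega]
  rw [hGsplit, hJ, hT', hint1, Finset.sum_congr rfl hshift,
    Finset.sum_add_distrib, Finset.sum_neg_distrib]
  ring
end

section
/- Let X be a real (or complex) Banach space, let V : X → X be a continuous linear operator with ‖V^m‖ ≤ A^m / m! for every integer m ≥ 1, where A ≥ 0. Let g ∈ X and define T : X → X by T(f) = g + V f. Suppose y ∈ X satisfies T(y) = y. Then for every p ∈ X and every integer i ≥ 1, ‖p − y‖ ≤ γ_i · ‖T^i(p) − p‖, where γ_i = Σ_{j=0}^{∞} A^{ij} / (ij)! and T^i denotes the i-fold composition of T. -/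
/-- a posteriori error bound, Proposition 7.2: if
`‖V^m‖ ≤ A^m/m!` for all `m ≥ 1`, `T(f) = g + V f`, and `T(y) = y`, then
`‖p − y‖ ≤ γ_i·‖T^i(p) − p‖` for every `p` and every `i ≥ 1`, where
`γ_i = Σ_j A^{ij}/(ij)!`. -/
theorem stmt_11 (X : Type*) [NormedAddCommGroup X] [NormedSpace ℝ X] [CompleteSpace X]
    (V : X →L[ℝ] X) (A : ℝ) (hA : 0 ≤ A)
    (hV : ∀ m : ℕ, 1 ≤ m → ‖V ^ m‖ ≤ A ^ m / (Nat.factorial m : ℝ))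
    (g : X) (T : X → X) (hT : ∀ f : X, T f = g + V f)
    (y : X) (hy : T y = y) :
    ∀ (p : X) (i : ℕ), 1 ≤ i →
      ‖p - y‖ ≤ (∑' j : ℕ, A ^ (i * j) / (Nat.factorial (i * j) : ℝ)) * ‖T^[i] p - p‖ := by
  intro p i hi
  set γ : ℝ := ∑' j : ℕ, A ^ (i * j) / (Nat.factorial (i * j) : ℝ) with hγ
  -- summability of the series defining γ
  have hsum : Summable (fun j : ℕ => A ^ (i * j) / (Nat.factorial (i * j) : ℝ)) := by
    have := Real.summable_pow_div_factorial A
    exact this.comp_injective (fun a b hab => Nat.eq_of_mul_eq_mul_left (by omega) hab)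
  have hterm_nonneg : ∀ j : ℕ, 0 ≤ A ^ (i * j) / (Nat.factorial (i * j) : ℝ) := fun j =>
    div_nonneg (pow_nonneg hA _) (Nat.cast_nonneg _)
  -- iterate difference formula
  have hiter : ∀ (n : ℕ) (f f' : X), T^[n] f - T^[n] f' = (V ^ n) (f - f') := by
    intro n
    induction n with
    | zero => simp
    | succ n ih =>
      intro f f'
      rw [Function.iterate_succ_apply', Function.iterate_succ_apply', hT, hT]
      have : g + V (T^[n] f) - (g + V (T^[n] f')) = V (T^[n] f - T^[n] f') := by
        rw [map_sub]; abel
      rw [this, ih, pow_succ', ContinuousLinearMap.mul_apply]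
  set W : X →L[ℝ] X := V ^ i with hW
  set e : X := p - y with he
  set d : X := T^[i] p - p with hd
  have hyi : T^[i] y = y := Function.iterate_fixed hy i
  -- key relation : e = W e - d
  have hkey : e = W e - d := by
    have h1 : T^[i] p - T^[i] y = W e := hiter i p y
    rw [hd, he, ← h1, hyi]; abel
  -- iterated relation
  have hrec : ∀ n : ℕ, e = (W ^ n) e - ∑ j ∈ Finset.range n, (W ^ j) d := by
    intro n
    induction n with
    | zero => simp
    | succ n ih =>
      calc e = (W ^ n) e - ∑ j ∈ Finset.range n, (W ^ j) d := ih
        _ = (W ^ n) (W e - d) - ∑ j ∈ Finset.range n, (W ^ j) d := by rw [← hkey]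
        _ = (W ^ (n + 1)) e - ∑ j ∈ Finset.range (n + 1), (W ^ j) d := by
            rw [map_sub, Finset.sum_range_succ, pow_succ, ContinuousLinearMap.mul_apply]
            abel
  -- norm bound for each n ≥ 1
  have hbound : ∀ n : ℕ, 1 ≤ n →
      ‖e‖ ≤ A ^ (i * n) / (Nat.factorial (i * n) : ℝ) * ‖e‖ + γ * ‖d‖ := by
    intro n hn
    have h1 : ‖e‖ ≤ ‖(W ^ n) e‖ + ‖∑ j ∈ Finset.range n, (W ^ j) d‖ := by
      conv_lhs => rw [hrec n]
      exact norm_sub_le _ _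
    have hWn : ‖(W ^ n) e‖ ≤ A ^ (i * n) / (Nat.factorial (i * n) : ℝ) * ‖e‖ := by
      have : W ^ n = V ^ (i * n) := by rw [hW, ← pow_mul]
      rw [this]
      calc ‖(V ^ (i * n)) e‖ ≤ ‖V ^ (i * n)‖ * ‖e‖ := (V ^ (i * n)).le_opNorm e
        _ ≤ A ^ (i * n) / (Nat.factorial (i * n) : ℝ) * ‖e‖ :=
            mul_le_mul_of_nonneg_right (hV _ (Nat.mul_pos hi hn)) (norm_nonneg _)
    have hsumb : ‖∑ j ∈ Finset.range n, (W ^ j) d‖ ≤ γ * ‖d‖ := by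
      calc ‖∑ j ∈ Finset.range n, (W ^ j) d‖ ≤ ∑ j ∈ Finset.range n, ‖(W ^ j) d‖ :=
            norm_sum_le (Finset.range n) (fun j => (W ^ j) d)
        _ ≤ ∑ j ∈ Finset.range n, A ^ (i * j) / (Nat.factorial (i * j) : ℝ) * ‖d‖ := by
            apply Finset.sum_le_sum
            intro j _
            rcases Nat.eq_zero_or_pos j with rfl | hj
            · simp
            · have : W ^ j = V ^ (i * j) := by rw [hW, ← pow_mul]
              rw [this]
              calc ‖(V ^ (i * j)) d‖ ≤ ‖V ^ (i * j)‖ * ‖d‖ := (V ^ (i * j)).le_opNorm d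
                _ ≤ A ^ (i * j) / (Nat.factorial (i * j) : ℝ) * ‖d‖ :=
                    mul_le_mul_of_nonneg_right (hV _ (Nat.mul_pos hi hj)) (norm_nonneg _)
        _ = (∑ j ∈ Finset.range n, A ^ (i * j) / (Nat.factorial (i * j) : ℝ)) * ‖d‖ := by
            rw [Finset.sum_mul]
        _ ≤ γ * ‖d‖ := by
            apply mul_le_mul_of_nonneg_right _ (norm_nonneg _)
            exact Summable.sum_le_tsum (Finset.range n) (fun j _ => hterm_nonneg j) hsum
    linarith
  -- take the limit n → ∞
  have hmul : Filter.Tendsto (fun n : ℕ => i * n) Filter.atTop Filter.atTop :=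
    Filter.tendsto_atTop_mono (fun n => Nat.le_mul_of_pos_left n (by omega)) Filter.tendsto_id
  have htend : Filter.Tendsto
      (fun n : ℕ => A ^ (i * n) / (Nat.factorial (i * n) : ℝ) * ‖e‖ + γ * ‖d‖)
      Filter.atTop (nhds (γ * ‖d‖)) := by
    have h0 : Filter.Tendsto (fun n : ℕ => A ^ (i * n) / (Nat.factorial (i * n) : ℝ))
        Filter.atTop (nhds 0) :=
      (FloorSemiring.tendsto_pow_div_factorial_atTop A).comp hmul
    have := (h0.mul_const ‖e‖).add_const (γ * ‖d‖)
    simpa using this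
  exact ge_of_tendsto htend (Filter.eventually_atTop.mpr ⟨1, fun n hn => hbound n hn⟩)
end

section
/- Let X be a real (or complex) Banach space, let V : X → X be a continuous linear operator with ‖V^m‖ ≤ A^m / m! for every integer m ≥ 1 (A ≥ 0), let g ∈ X, and define T(f) = g + V f. Let ε ≥ 0, let i ≥ 1, and let p_0, p_1, …, p_i ∈ X satisfy ‖p_{k+1} − T(p_k)‖ ≤ ε for 0 ≤ k ≤ i−1. Then ‖p_i − T^i(p_0)‖ ≤ (Σ_{k=0}^{i−1} A^k/k!)·ε ≤ e^A·ε. -/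
private lemma aux_iter_sub {X : Type*} [NormedAddCommGroup X] [NormedSpace ℝ X]
    (V : X →L[ℝ] X) (g : X) (T : X → X) (hT : ∀ f : X, T f = g + V f) :
    ∀ (n : ℕ) (x y : X), T^[n] x - T^[n] y = (V ^ n) (x - y) := by
  intro n
  induction n with
  | zero => intro x y; simp
  | succ n ih =>
    intro x y
    rw [Function.iterate_succ_apply, Function.iterate_succ_apply, ih (T x) (T y)]
    have : T x - T y = V (x - y) := by rw [hT, hT, map_sub]; abel
    rw [this, pow_succ]
    rfl

private lemma aux_main {X : Type*} [NormedAddCommGroup X] [NormedSpace ℝ X]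
    (V : X →L[ℝ] X) (A : ℝ)
    (hV : ∀ m : ℕ, 1 ≤ m → ‖V ^ m‖ ≤ A ^ m / (Nat.factorial m : ℝ))
    (g : X) (T : X → X) (hT : ∀ f : X, T f = g + V f)
    (ε : ℝ) :
    ∀ (i : ℕ) (p : ℕ → X), (∀ k : ℕ, k < i → ‖p (k + 1) - T (p k)‖ ≤ ε) →
      ‖p i - T^[i] (p 0)‖ ≤ (∑ k ∈ Finset.range i, A ^ k / (Nat.factorial k : ℝ)) * ε := by
  have hVk : ∀ m : ℕ, ‖V ^ m‖ ≤ A ^ m / (Nat.factorial m : ℝ) := by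
    intro m
    rcases Nat.eq_zero_or_pos m with h | h
    · subst h; simpa using (by exact ContinuousLinearMap.norm_id_le : ‖(1 : X →L[ℝ] X)‖ ≤ 1)
    · exact hV m h
  intro i
  induction i with
  | zero => intro p hp; simp
  | succ i ih =>
    intro p hp
    have h1 : ‖p (i + 1) - T^[i] (p 1)‖ ≤
        (∑ k ∈ Finset.range i, A ^ k / (Nat.factorial k : ℝ)) * ε := by
      have := ih (fun k => p (k + 1)) (fun k hk => hp (k + 1) (by omega))
      simpa using this
    have h2 : ‖T^[i] (p 1) - T^[(i + 1)] (p 0)‖ ≤ (A ^ i / (Nat.factorial i : ℝ)) * ε := by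
      rw [Function.iterate_succ_apply, aux_iter_sub V g T hT i (p 1) (T (p 0))]
      calc ‖(V ^ i) (p 1 - T (p 0))‖ ≤ ‖V ^ i‖ * ‖p 1 - T (p 0)‖ :=
            (V ^ i).le_opNorm _
        _ ≤ (A ^ i / (Nat.factorial i : ℝ)) * ε := by
            apply mul_le_mul (hVk i) (hp 0 (by omega)) (norm_nonneg _)
            exact le_trans (norm_nonneg _) (hVk i)
    calc ‖p (i + 1) - T^[(i + 1)] (p 0)‖
        ≤ ‖p (i + 1) - T^[i] (p 1)‖ + ‖T^[i] (p 1) - T^[(i + 1)] (p 0)‖ :=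
          norm_sub_le_norm_sub_add_norm_sub _ _ _
      _ ≤ (∑ k ∈ Finset.range i, A ^ k / (Nat.factorial k : ℝ)) * ε
            + (A ^ i / (Nat.factorial i : ℝ)) * ε := add_le_add h1 h2
      _ = (∑ k ∈ Finset.range (i + 1), A ^ k / (Nat.factorial k : ℝ)) * ε := by
          rw [Finset.sum_range_succ, add_mul]

/-- accumulated error of approximate iteration: if
`‖V^m‖ ≤ A^m/m!` for all `m ≥ 1`, `T(f) = g + V f`, and
`‖p_{k+1} − T(p_k)‖ ≤ ε` for `0 ≤ k ≤ i−1`, then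
`‖p_i − T^i(p_0)‖ ≤ (Σ_{k=0}^{i−1} A^k/k!)·ε ≤ e^A·ε`. -/
theorem stmt_12 (X : Type*) [NormedAddCommGroup X] [NormedSpace ℝ X] [CompleteSpace X]
    (V : X →L[ℝ] X) (A : ℝ) (hA : 0 ≤ A)
    (hV : ∀ m : ℕ, 1 ≤ m → ‖V ^ m‖ ≤ A ^ m / (Nat.factorial m : ℝ))
    (g : X) (T : X → X) (hT : ∀ f : X, T f = g + V f)
    (ε : ℝ) (hε : 0 ≤ ε) (i : ℕ) (hi : 1 ≤ i) (p : ℕ → X)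
    (hp : ∀ k : ℕ, k ≤ i - 1 → ‖p (k + 1) - T (p k)‖ ≤ ε) :
    ‖p i - T^[i] (p 0)‖ ≤ (∑ k ∈ Finset.range i, A ^ k / (Nat.factorial k : ℝ)) * ε ∧
    (∑ k ∈ Finset.range i, A ^ k / (Nat.factorial k : ℝ)) * ε ≤ Real.exp A * ε := by
  constructor
  · exact aux_main V A hV g T hT ε i p (fun k hk => hp k (by omega))
  · exact mul_le_mul_of_nonneg_right (Real.sum_le_exp_of_nonneg hA i) hε
end

section
/- Let X be a real (or complex) Banach space, let V : X → X be a continuous linear operator with ‖V^m‖ ≤ A^m / m! for every integer m ≥ 1 (A ≥ 0), let g ∈ X, define T(f) = g + V f, and suppose y ∈ X satisfies T(y) = y. Let ε ≥ 0, i ≥ 1, and let p_0 = p, p_1, …, p_i ∈ X satisfy ‖p_{k+1} − T(p_k)‖ ≤ ε for 0 ≤ k ≤ i−1. Then for any δ ≥ ‖p − p_i‖, ‖p − y‖ ≤ γ_i·(δ + e^A·ε), where γ_i = Σ_{j=0}^{∞} A^{ij}/(ij)!. -/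
open Finset Filter

/-- correctness of the validation bound, Theorem 7.5: with
`‖V^m‖ ≤ A^m/m!`, `T(f) = g + V f`, `T(y) = y`, and approximate iterates
`‖p_{k+1} − T(p_k)‖ ≤ ε` starting from `p_0 = p`, one has, for any
`δ ≥ ‖p − p_i‖`, the bound `‖p − y‖ ≤ γ_i·(δ + e^A·ε)` where
`γ_i = Σ_j A^{ij}/(ij)!`. -/
theorem stmt_13 (X : Type*) [NormedAddCommGroup X] [NormedSpace ℝ X] [CompleteSpace X]
    (V : X →L[ℝ] X) (A : ℝ) (hA : 0 ≤ A)
    (hV : ∀ m : ℕ, 1 ≤ m → ‖V ^ m‖ ≤ A ^ m / (Nat.factorial m : ℝ))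
    (g : X) (T : X → X) (hT : ∀ f : X, T f = g + V f)
    (y : X) (hy : T y = y)
    (ε : ℝ) (hε : 0 ≤ ε) (i : ℕ) (hi : 1 ≤ i) (p : ℕ → X)
    (hp : ∀ k : ℕ, k ≤ i - 1 → ‖p (k + 1) - T (p k)‖ ≤ ε)
    (δ : ℝ) (hδ : ‖p 0 - p i‖ ≤ δ) :
    ‖p 0 - y‖ ≤
      (∑' j : ℕ, A ^ (i * j) / (Nat.factorial (i * j) : ℝ)) * (δ + Real.exp A * ε) := by
  have hi' : 0 < i := hi
  -- pointwise norm bound for powers of V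
  have hVm : ∀ (m : ℕ) (x : X), ‖(V ^ m) x‖ ≤ A ^ m / (Nat.factorial m : ℝ) * ‖x‖ := by
    intro m x
    rcases Nat.eq_zero_or_pos m with h | h
    · subst h; simp
    · exact le_trans ((V ^ m).le_opNorm x)
        (mul_le_mul_of_nonneg_right (hV m h) (norm_nonneg x))
  -- difference of iterates
  have hTit : ∀ (a b : X) (n : ℕ), T^[n] a - T^[n] b = (V ^ n) (a - b) := by
    intro a b n
    induction n with
    | zero => simp
    | succ n ih =>
      rw [Function.iterate_succ_apply', Function.iterate_succ_apply', hT, hT,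
        add_sub_add_left_eq_sub, ← map_sub, ih, pow_succ', ContinuousLinearMap.mul_apply]
  have hyfix : ∀ n : ℕ, T^[n] y = y := fun n =>
    Function.IsFixedPt.iterate hy n
  set d : X := p 0 - T^[i] (p 0) with hd
  -- the telescoping identity
  have key : ∀ N : ℕ, p 0 - y =
      (∑ j ∈ Finset.range N, (V ^ (i * j)) d) + (V ^ (i * N)) (p 0 - y) := by
    intro N
    induction N with
    | zero => simp
    | succ N ih =>
      have step : p 0 - y = d + (V ^ i) (p 0 - y) := by
        rw [hd, ← hTit (p 0) y i, hyfix i]; abel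
      have : (V ^ (i * N)) (p 0 - y) =
          (V ^ (i * N)) d + (V ^ (i * (N + 1))) (p 0 - y) := by
        nth_rewrite 1 [step]
        rw [map_add, mul_add, mul_one, pow_add, ContinuousLinearMap.mul_apply]
      calc p 0 - y = (∑ j ∈ Finset.range N, (V ^ (i * j)) d) + (V ^ (i * N)) (p 0 - y) := ih
        _ = (∑ j ∈ Finset.range N, (V ^ (i * j)) d)
              + ((V ^ (i * N)) d + (V ^ (i * (N + 1))) (p 0 - y)) := by rw [← this]
        _ = _ := by rw [Finset.sum_range_succ]; abel
  -- summability of the gamma series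
  have hinj : Function.Injective (fun j : ℕ => i * j) := fun a b h =>
    Nat.eq_of_mul_eq_mul_left hi' h
  have hsum : Summable (fun j : ℕ => A ^ (i * j) / (Nat.factorial (i * j) : ℝ)) :=
    (Real.summable_pow_div_factorial A).comp_injective hinj
  set γ : ℝ := ∑' j : ℕ, A ^ (i * j) / (Nat.factorial (i * j) : ℝ) with hγ
  -- the a posteriori bound ‖p 0 - y‖ ≤ γ ‖d‖
  have hbd : ∀ N : ℕ, ‖p 0 - y‖ ≤
      (∑ j ∈ Finset.range N, A ^ (i * j) / (Nat.factorial (i * j) : ℝ)) * ‖d‖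
        + A ^ (i * N) / (Nat.factorial (i * N) : ℝ) * ‖p 0 - y‖ := by
    intro N
    calc ‖p 0 - y‖ = ‖(∑ j ∈ Finset.range N, (V ^ (i * j)) d) + (V ^ (i * N)) (p 0 - y)‖ := by
          rw [← key N]
      _ ≤ ‖∑ j ∈ Finset.range N, (V ^ (i * j)) d‖ + ‖(V ^ (i * N)) (p 0 - y)‖ :=
          norm_add_le _ _
      _ ≤ (∑ j ∈ Finset.range N, A ^ (i * j) / (Nat.factorial (i * j) : ℝ) * ‖d‖)
            + A ^ (i * N) / (Nat.factorial (i * N) : ℝ) * ‖p 0 - y‖ := by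
          gcongr
          · exact le_trans (norm_sum_le _ _) (Finset.sum_le_sum fun j _ => hVm _ _)
          · exact hVm _ _
      _ = _ := by rw [← Finset.sum_mul]
  have hlim1 : Tendsto (fun N => (∑ j ∈ Finset.range N,
      A ^ (i * j) / (Nat.factorial (i * j) : ℝ)) * ‖d‖) atTop (nhds (γ * ‖d‖)) :=
    (hsum.hasSum.tendsto_sum_nat).mul_const _
  have hlim2 : Tendsto (fun N : ℕ => A ^ (i * N) / (Nat.factorial (i * N) : ℝ) * ‖p 0 - y‖)
      atTop (nhds 0) := by
    have h0 : Tendsto (fun m : ℕ => A ^ m / (Nat.factorial m : ℝ)) atTop (nhds 0) :=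
      (Real.summable_pow_div_factorial A).tendsto_atTop_zero
    have hm : Tendsto (fun N : ℕ => i * N) atTop atTop :=
      tendsto_atTop_mono (fun N => Nat.le_mul_of_pos_left N hi') tendsto_id
    simpa using (h0.comp hm).mul_const ‖p 0 - y‖
  have hmain : ‖p 0 - y‖ ≤ γ * ‖d‖ := by
    have := hlim1.add hlim2
    rw [add_zero] at this
    exact ge_of_tendsto' this hbd
  -- bound on ‖d‖
  have hiter : ∀ n : ℕ, p n - T^[n] (p 0) =
      ∑ k ∈ Finset.range n, (V ^ k) (p (n - k) - T (p (n - 1 - k))) := by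
    intro n
    induction n with
    | zero => simp
    | succ n ih =>
      rw [Finset.sum_range_succ']
      have he : ∀ k, k ∈ Finset.range n →
          (V ^ (k + 1)) (p (n + 1 - (k + 1)) - T (p (n + 1 - 1 - (k + 1)))) =
          (V ^ (k + 1)) (p (n - k) - T (p (n - 1 - k))) := by
        intro k hk
        have e1 : n + 1 - (k + 1) = n - k := by omega
        have e2 : n + 1 - 1 - (k + 1) = n - 1 - k := by omega
        rw [e1, e2]
      rw [Finset.sum_congr rfl he]
      have hpow : ∀ k, (V ^ (k + 1)) (p (n - k) - T (p (n - 1 - k))) =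
          V ((V ^ k) (p (n - k) - T (p (n - 1 - k)))) := by
        intro k; rw [pow_succ', ContinuousLinearMap.mul_apply]
      rw [Finset.sum_congr rfl (fun k _ => hpow k), ← map_sum, ← ih,
        Function.iterate_succ_apply']
      simp only [pow_zero, ContinuousLinearMap.one_apply, Nat.sub_zero, Nat.add_sub_cancel]
      rw [hT (p n), hT (T^[n] (p 0)), map_sub]
      abel
  have hdi : ‖p i - T^[i] (p 0)‖ ≤ Real.exp A * ε := by
    calc ‖p i - T^[i] (p 0)‖
        ≤ ∑ k ∈ Finset.range i, ‖(V ^ k) (p (i - k) - T (p (i - 1 - k)))‖ := by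
          rw [hiter i]; exact norm_sum_le _ _
      _ ≤ ∑ k ∈ Finset.range i, A ^ k / (Nat.factorial k : ℝ) * ε := by
          apply Finset.sum_le_sum
          intro k hk
          have hk' : k < i := Finset.mem_range.mp hk
          have h1 : i - 1 - k ≤ i - 1 := Nat.sub_le _ _
          have h2 : i - 1 - k + 1 = i - k := by omega
          have := hp (i - 1 - k) h1
          rw [h2] at this
          exact le_trans (hVm k _) (mul_le_mul_of_nonneg_left this
            (div_nonneg (pow_nonneg hA k) (Nat.cast_nonneg _)))
      _ = (∑ k ∈ Finset.range i, A ^ k / (Nat.factorial k : ℝ)) * ε := by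
          rw [Finset.sum_mul]
      _ ≤ Real.exp A * ε :=
          mul_le_mul_of_nonneg_right (Real.sum_le_exp_of_nonneg hA i) hε
  have hdbd : ‖d‖ ≤ δ + Real.exp A * ε := by
    calc ‖d‖ = ‖(p 0 - p i) + (p i - T^[i] (p 0))‖ := by rw [hd]; congr 1; abel
      _ ≤ ‖p 0 - p i‖ + ‖p i - T^[i] (p 0)‖ := norm_add_le _ _
      _ ≤ δ + Real.exp A * ε := add_le_add hδ hdi
  have hγ0 : 0 ≤ γ :=
    tsum_nonneg fun j => div_nonneg (pow_nonneg hA _) (Nat.cast_nonneg _)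
  exact le_trans hmain (mul_le_mul_of_nonneg_left hdbd hγ0)
end

section
/- Let X be a real (or complex) Banach space, let V : X → X be a continuous linear operator with ‖V^m‖ ≤ A^m/m! for all m ≥ 1 (A ≥ 0), let g ∈ X, define T(f) = g + V f, and suppose y ∈ X satisfies T(y) = y. Let ε ≥ 0, i ≥ 1, and let p_0 = p, p_1, …, p_i ∈ X satisfy ‖p_{k+1} − T(p_k)‖ ≤ ε for 0 ≤ k ≤ i−1. Then ‖p − p_i‖ ≤ (1 + ‖V^i‖)·‖p − y‖ + e^A·ε. In particular, if moreover ‖V^i‖ ≤ 1/2, then ‖p − y‖ ≥ (2/3)·(‖p − p_i‖ − e^A·ε). -/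
/-- tightness of the validation bound: with `‖V^m‖ ≤ A^m/m!`,
`T(f) = g + V f`, `T(y) = y`, and approximate iterates
`‖p_{k+1} − T(p_k)‖ ≤ ε` starting from `p_0 = p`, one has
`‖p − p_i‖ ≤ (1 + ‖V^i‖)·‖p − y‖ + e^A·ε`; in particular, if `‖V^i‖ ≤ 1/2`,
then `‖p − y‖ ≥ (2/3)·(‖p − p_i‖ − e^A·ε)`. -/
theorem stmt_14 (X : Type*) [NormedAddCommGroup X] [NormedSpace ℝ X] [CompleteSpace X]
    (V : X →L[ℝ] X) (A : ℝ) (hA : 0 ≤ A)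
    (hV : ∀ m : ℕ, 1 ≤ m → ‖V ^ m‖ ≤ A ^ m / (Nat.factorial m : ℝ))
    (g : X) (T : X → X) (hT : ∀ f : X, T f = g + V f)
    (y : X) (hy : T y = y)
    (ε : ℝ) (hε : 0 ≤ ε) (i : ℕ) (hi : 1 ≤ i) (p : ℕ → X)
    (hp : ∀ k : ℕ, k ≤ i - 1 → ‖p (k + 1) - T (p k)‖ ≤ ε) :
    ‖p 0 - p i‖ ≤ (1 + ‖V ^ i‖) * ‖p 0 - y‖ + Real.exp A * ε ∧
    (‖V ^ i‖ ≤ 1 / 2 →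
      (2 / 3 : ℝ) * (‖p 0 - p i‖ - Real.exp A * ε) ≤ ‖p 0 - y‖) := by
  -- difference of iterates is V^n of the difference
  have hdiff : ∀ (n : ℕ) (a b : X), T^[n] a - T^[n] b = (V ^ n) (a - b) := by
    intro n
    induction n with
    | zero => intro a b; simp
    | succ n ih =>
      intro a b
      rw [Function.iterate_succ_apply, Function.iterate_succ_apply, ih (T a) (T b)]
      have : T a - T b = V (a - b) := by rw [hT, hT, map_sub]; abel
      rw [this, pow_succ]
      rfl
  -- approximation of the iterate
  have key : ∀ n, n ≤ i → ‖T^[n] (p (i - n)) - p i‖ ≤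
      ε * ∑ m ∈ Finset.range n, ‖V ^ m‖ := by
    intro n
    induction n with
    | zero => intro _; simp
    | succ n ih =>
      intro hn
      have hn' : n ≤ i := le_of_lt hn
      have hisub : i - n = (i - (n + 1)) + 1 := by omega
      have hk : i - (n + 1) ≤ i - 1 := by omega
      calc ‖T^[n+1] (p (i - (n+1))) - p i‖
          = ‖(T^[n] (T (p (i - (n+1)))) - T^[n] (p (i - n))) + (T^[n] (p (i - n)) - p i)‖ := by
            rw [Function.iterate_succ_apply]; congr 1; abel
        _ ≤ ‖T^[n] (T (p (i - (n+1)))) - T^[n] (p (i - n))‖ + ‖T^[n] (p (i - n)) - p i‖ :=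
            norm_add_le _ _
        _ ≤ ‖V ^ n‖ * ε + ε * ∑ m ∈ Finset.range n, ‖V ^ m‖ := by
            refine add_le_add ?_ (ih hn')
            rw [hdiff]
            refine le_trans ((V ^ n).le_opNorm _) ?_
            have := hp (i - (n+1)) hk
            rw [← hisub] at this
            have : ‖T (p (i - (n+1))) - p (i - n)‖ ≤ ε := by
              rw [norm_sub_rev]; rw [hisub]; exact hp (i - (n+1)) hk
            exact mul_le_mul_of_nonneg_left this (norm_nonneg _)
        _ = ε * ∑ m ∈ Finset.range (n+1), ‖V ^ m‖ := by
            rw [Finset.sum_range_succ]; ring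
  have hsum : ∑ m ∈ Finset.range i, ‖V ^ m‖ ≤ Real.exp A := by
    calc ∑ m ∈ Finset.range i, ‖V ^ m‖
        ≤ ∑ m ∈ Finset.range i, A ^ m / (Nat.factorial m : ℝ) := by
          refine Finset.sum_le_sum ?_
          intro m _
          rcases Nat.eq_zero_or_pos m with h0 | h1
          · subst h0; rw [pow_zero, pow_zero, Nat.factorial_zero, Nat.cast_one, div_one]; exact ContinuousLinearMap.norm_id_le
          · exact hV m h1
      _ ≤ Real.exp A := Real.sum_le_exp_of_nonneg hA i
  have hkey : ‖T^[i] (p 0) - p i‖ ≤ Real.exp A * ε := by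
    have := key i le_rfl
    simp only [Nat.sub_self] at this
    refine this.trans ?_
    rw [mul_comm]
    exact mul_le_mul_of_nonneg_right hsum hε
  have hyfix : T^[i] y = y := Function.iterate_fixed hy i
  have hVy : ‖y - T^[i] (p 0)‖ ≤ ‖V ^ i‖ * ‖p 0 - y‖ := by
    have : y - T^[i] (p 0) = (V ^ i) (y - p 0) := by
      rw [← hdiff i y (p 0), hyfix]
    rw [this]
    refine le_trans ((V ^ i).le_opNorm _) ?_
    rw [norm_sub_rev]
  have h1 : ‖p 0 - p i‖ ≤ (1 + ‖V ^ i‖) * ‖p 0 - y‖ + Real.exp A * ε := by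
    calc ‖p 0 - p i‖
        = ‖(p 0 - y) + (y - T^[i] (p 0)) + (T^[i] (p 0) - p i)‖ := by congr 1; abel
      _ ≤ ‖p 0 - y‖ + ‖y - T^[i] (p 0)‖ + ‖T^[i] (p 0) - p i‖ := norm_add₃_le
      _ ≤ ‖p 0 - y‖ + ‖V ^ i‖ * ‖p 0 - y‖ + Real.exp A * ε := by
          exact add_le_add (add_le_add le_rfl hVy) hkey
      _ = (1 + ‖V ^ i‖) * ‖p 0 - y‖ + Real.exp A * ε := by ring
  refine ⟨h1, fun hVi => ?_⟩
  have h0 : (0:ℝ) ≤ ‖p 0 - y‖ := norm_nonneg _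
  nlinarith [h1, hVi, h0]
end

section
/- Let d ≥ 0 and let (c_n)_{n=−d}^{d} be real numbers with c_{−n} = c_n for all n. Let f(x) = Σ_{n=−d}^{d} c_n·T_n(x), where T_n is the Chebyshev polynomial of the first kind (T_{−n} = T_n). Set M = Σ_{n=−d}^{d} |c_n| and ‖f‖_∞ = sup_{x∈[−1,1]} |f(x)|. Then ‖f‖_∞ ≤ M ≤ √(2d+1)·‖f‖_∞. -/
open Polynomial Finset


lemma cos_sum_eq (N : ℕ) (hN : 0 < N) (j : ℤ) :
    ∑ k ∈ Finset.range N, Real.cos (2 * Real.pi * j * k / N) =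
      if (N : ℤ) ∣ j then (N : ℝ) else 0 := by
  split_ifs with h
  · obtain ⟨t, rfl⟩ := h
    have : ∀ k ∈ Finset.range N, Real.cos (2 * Real.pi * ((N : ℝ) * t) * k / N) = 1 := by
      intro k _
      have hN' : (N : ℝ) ≠ 0 := by positivity
      have : (2 * Real.pi * ((N : ℝ) * t) * k / N : ℝ) = ((t * k : ℤ) : ℝ) * (2 * Real.pi) := by
        field_simp; push_cast; ring
      rw [this, Real.cos_int_mul_two_pi]
    push_cast
    rw [Finset.sum_congr rfl this]
    simp
  · -- geometric sum of roots of unity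
    have hN' : (N : ℝ) ≠ 0 := by positivity
    set z : ℂ := Complex.exp ((2 * Real.pi * j / N : ℝ) * Complex.I) with hz
    have hz1 : z ≠ 1 := by
      rw [hz, Ne, Complex.exp_eq_one_iff]
      rintro ⟨n, hn⟩
      apply h
      refine ⟨n, ?_⟩
      have hI : ((2 * Real.pi * j / N : ℝ) : ℂ) = ((n * (2 * Real.pi) : ℝ) : ℂ) := by
        have := hn
        rw [show ((n : ℂ)) * (2 * Real.pi * Complex.I) = ((n * (2 * Real.pi) : ℝ) : ℂ) * Complex.I by push_cast; ring] at this
        exact mul_right_cancel₀ Complex.I_ne_zero this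
      have h2 : (2 * Real.pi * j / N : ℝ) = n * (2 * Real.pi) := by exact_mod_cast hI
      have hπ : (2 * Real.pi) ≠ 0 := by positivity
      have hπ2 : Real.pi > 0 := Real.pi_pos
      have : (j : ℝ) = N * n := by
        field_simp at h2
        nlinarith [h2]
      exact_mod_cast this
    have hzN : z ^ N = 1 := by
      rw [hz, ← Complex.exp_nat_mul]
      have hNc : (N : ℂ) ≠ 0 := Nat.cast_ne_zero.mpr hN.ne'
      have heq : (N : ℂ) * (((2 * Real.pi * j / N : ℝ) : ℂ) * Complex.I)
          = (j : ℂ) * (2 * Real.pi * Complex.I) := by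
        push_cast
        field_simp
      rw [heq]
      exact Complex.exp_int_mul_two_pi_mul_I j
    have hsum : ∑ k ∈ Finset.range N, z ^ k = 0 := by
      rw [geom_sum_eq hz1, hzN]; simp
    have hre : ∀ k : ℕ, (z ^ k).re = Real.cos (2 * Real.pi * j * k / N) := by
      intro k
      rw [hz, ← Complex.exp_nat_mul,
        show (k : ℂ) * (((2 * Real.pi * j / N : ℝ)) * Complex.I) = ((2 * Real.pi * j * k / N : ℝ) : ℂ) * Complex.I by push_cast; ring]
      exact Complex.exp_ofReal_mul_I_re _
    calc ∑ k ∈ Finset.range N, Real.cos (2 * Real.pi * j * k / N)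
        = (∑ k ∈ Finset.range N, z ^ k).re := by
          rw [Complex.re_sum]; exact (Finset.sum_congr rfl fun k _ => (hre k).symm)
      _ = 0 := by rw [hsum]; simp

lemma dvd_small (N a : ℤ) (h : N ∣ a) (h2 : |a| < N) : a = 0 := by
  by_contra ha
  have h3 : N ∣ |a| := (dvd_abs N a).mpr h
  have := Int.le_of_dvd (abs_pos.mpr ha) h3
  omega

lemma cos_mul_cos' (a b : ℝ) :
    Real.cos a * Real.cos b = (Real.cos (a - b) + Real.cos (a + b)) / 2 := by
  have h1 := Real.cos_add a b
  have h2 := Real.cos_sub a b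
  linarith

set_option maxHeartbeats 1000000 in
lemma key_identity (d : ℕ) (c : ℤ → ℝ) (hc : ∀ n : ℤ, c (-n) = c n)
    (cos_sum_eq : ∀ (N : ℕ), 0 < N → ∀ (j : ℤ),
      ∑ k ∈ Finset.range N, Real.cos (2 * Real.pi * j * k / N) =
        if (N : ℤ) ∣ j then (N : ℝ) else 0) :
    ∑ k ∈ Finset.range (2 * d + 1),
      (∑ n ∈ Finset.Icc (-(d : ℤ)) (d : ℤ),
        c n * Real.cos (n * (2 * Real.pi * k / (2 * d + 1)))) ^ 2
      = (2 * d + 1) * ∑ n ∈ Finset.Icc (-(d : ℤ)) (d : ℤ), (c n) ^ 2 := by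
  set N : ℕ := 2 * d + 1 with hNdef
  have hN : 0 < N := by omega
  have hNZ : (N : ℤ) = 2 * (d : ℤ) + 1 := by push_cast [hNdef]; ring
  have inner : ∀ m ∈ Finset.Icc (-(d : ℤ)) (d : ℤ), ∀ n ∈ Finset.Icc (-(d : ℤ)) (d : ℤ),
      ∑ k ∈ Finset.range N,
        Real.cos (m * (2 * Real.pi * k / N)) * Real.cos (n * (2 * Real.pi * k / N))
      = (if n = m then (N : ℝ) / 2 else 0) + (if n = -m then (N : ℝ) / 2 else 0) := by
    intro m hm n hn
    simp only [Finset.mem_Icc] at hm hn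
    have harg : ∀ k : ℕ,
        Real.cos (m * (2 * Real.pi * k / N)) * Real.cos (n * (2 * Real.pi * k / N))
        = (Real.cos (2 * Real.pi * ((m - n : ℤ)) * k / N)
            + Real.cos (2 * Real.pi * ((m + n : ℤ)) * k / N)) / 2 := by
      intro k
      rw [cos_mul_cos']
      congr 2
      · congr 1; push_cast; ring
      · congr 1; push_cast; ring
    rw [Finset.sum_congr rfl fun k _ => harg k, ← Finset.sum_div, Finset.sum_add_distrib,
      cos_sum_eq N hN (m - n), cos_sum_eq N hN (m + n)]
    have h1 : ((N : ℤ) ∣ (m - n)) ↔ n = m := by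
      constructor
      · intro h
        have habs : |m - n| < (N : ℤ) := by rw [abs_lt]; omega
        have := dvd_small (N : ℤ) (m - n) h habs
        omega
      · rintro rfl; simp
    have h2 : ((N : ℤ) ∣ (m + n)) ↔ n = -m := by
      constructor
      · intro h
        have habs : |m + n| < (N : ℤ) := by rw [abs_lt]; omega
        have := dvd_small (N : ℤ) (m + n) h habs
        omega
      · rintro rfl; simp
    rw [if_congr h1 rfl rfl, if_congr h2 rfl rfl]
    split_ifs <;> ring
  have expand : ∀ k : ℕ,
      (∑ n ∈ Finset.Icc (-(d : ℤ)) (d : ℤ), c n * Real.cos (n * (2 * Real.pi * k / N))) ^ 2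
      = ∑ m ∈ Finset.Icc (-(d : ℤ)) (d : ℤ), ∑ n ∈ Finset.Icc (-(d : ℤ)) (d : ℤ),
          (c m * c n) * (Real.cos (m * (2 * Real.pi * k / N)) * Real.cos (n * (2 * Real.pi * k / N))) := by
    intro k
    rw [sq, Finset.sum_mul_sum]
    exact Finset.sum_congr rfl fun m _ => Finset.sum_congr rfl fun n _ => by ring
  have hNR : (2 * (d : ℝ) + 1) = (N : ℝ) := by push_cast [hNdef]; ring
  rw [hNR]
  calc ∑ k ∈ Finset.range N,
        (∑ n ∈ Finset.Icc (-(d : ℤ)) (d : ℤ), c n * Real.cos (n * (2 * Real.pi * k / N))) ^ 2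
      = ∑ m ∈ Finset.Icc (-(d : ℤ)) (d : ℤ), ∑ n ∈ Finset.Icc (-(d : ℤ)) (d : ℤ),
          (c m * c n) * ∑ k ∈ Finset.range N,
            Real.cos (m * (2 * Real.pi * k / N)) * Real.cos (n * (2 * Real.pi * k / N)) := by
        rw [Finset.sum_congr rfl fun k _ => expand k, Finset.sum_comm]
        exact Finset.sum_congr rfl fun m _ => by
          rw [Finset.sum_comm]
          exact Finset.sum_congr rfl fun n _ => by rw [Finset.mul_sum]
    _ = ∑ m ∈ Finset.Icc (-(d : ℤ)) (d : ℤ),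
          (c m * c m * ((N : ℝ) / 2) + c m * c (-m) * ((N : ℝ) / 2)) := by
        refine Finset.sum_congr rfl fun m hm => ?_
        have hm' : -m ∈ Finset.Icc (-(d : ℤ)) (d : ℤ) := by
          simp only [Finset.mem_Icc] at hm ⊢; omega
        rw [Finset.sum_congr rfl fun n hn => by rw [inner m hm n hn]]
        simp only [mul_add, mul_ite, mul_zero, Finset.sum_add_distrib,
          Finset.sum_ite_eq' (Finset.Icc (-(d : ℤ)) (d : ℤ)), hm, hm', if_pos]
    _ = (N : ℝ) * ∑ n ∈ Finset.Icc (-(d : ℤ)) (d : ℤ), (c n) ^ 2 := by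
        rw [Finset.mul_sum]
        refine Finset.sum_congr rfl fun m hm => ?_
        rw [hc m]
        ring


set_option maxHeartbeats 1000000 in
/-- Lemma 7.4: for a symmetric Chebyshev-form polynomial
`f = Σ_{n=−d}^{d} c_n·T_n` with `c_{−n} = c_n`, the quantity
`M = Σ_{n=−d}^{d} |c_n|` satisfies `‖f‖_∞ ≤ M ≤ √(2d+1)·‖f‖_∞`. -/
theorem stmt_15 (d : ℕ) (c : ℤ → ℝ) (hc : ∀ n : ℤ, c (-n) = c n) :
    (sSup ((fun x : ℝ =>
        |∑ n ∈ Finset.Icc (-(d : ℤ)) (d : ℤ),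
          c n * (Polynomial.Chebyshev.T ℝ n).eval x|) '' Set.Icc (-1 : ℝ) 1) ≤
      ∑ n ∈ Finset.Icc (-(d : ℤ)) (d : ℤ), |c n|) ∧
    (∑ n ∈ Finset.Icc (-(d : ℤ)) (d : ℤ), |c n| ≤
      Real.sqrt (2 * d + 1) *
        sSup ((fun x : ℝ =>
          |∑ n ∈ Finset.Icc (-(d : ℤ)) (d : ℤ),
            c n * (Polynomial.Chebyshev.T ℝ n).eval x|) '' Set.Icc (-1 : ℝ) 1)) := by
  set I := Finset.Icc (-(d : ℤ)) (d : ℤ) with hI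
  set F : ℝ → ℝ := fun x => |∑ n ∈ I, c n * (Polynomial.Chebyshev.T ℝ n).eval x| with hF
  set M : ℝ := ∑ n ∈ I, |c n| with hM
  set S : ℝ := sSup (F '' Set.Icc (-1 : ℝ) 1) with hS
  have hM0 : 0 ≤ M := Finset.sum_nonneg fun n _ => abs_nonneg _
  -- every value of F on [-1,1] is at most M
  have hub : ∀ y ∈ F '' Set.Icc (-1 : ℝ) 1, y ≤ M := by
    rintro y ⟨x, hx, rfl⟩
    obtain ⟨hx1, hx2⟩ := hx
    have hxcos : Real.cos (Real.arccos x) = x := Real.cos_arccos hx1 hx2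
    calc F x ≤ ∑ n ∈ I, |c n * (Polynomial.Chebyshev.T ℝ n).eval x| :=
          Finset.abs_sum_le_sum_abs _ _
      _ ≤ M := by
          refine Finset.sum_le_sum fun n _ => ?_
          rw [abs_mul, ← hxcos, Polynomial.Chebyshev.T_real_cos]
          calc |c n| * |Real.cos (n * Real.arccos x)| ≤ |c n| * 1 :=
                mul_le_mul_of_nonneg_left (Real.abs_cos_le_one _) (abs_nonneg _)
            _ = |c n| := mul_one _
  have hbdd : BddAbove (F '' Set.Icc (-1 : ℝ) 1) := ⟨M, fun y hy => hub y hy⟩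
  have h1 : S ≤ M := Real.sSup_le hub hM0
  -- S bounds F at every point of [-1,1]
  have hFS : ∀ x ∈ Set.Icc (-1 : ℝ) 1, F x ≤ S := fun x hx =>
    le_csSup hbdd ⟨x, hx, rfl⟩
  have hS0 : 0 ≤ S := le_trans (abs_nonneg _) (hFS 1 (by norm_num))
  -- sample points
  have hsample : ∀ k : ℕ,
      |∑ n ∈ I, c n * Real.cos (n * (2 * Real.pi * k / (2 * d + 1)))| ≤ S := by
    intro k
    have hmem : Real.cos (2 * Real.pi * k / (2 * d + 1)) ∈ Set.Icc (-1 : ℝ) 1 :=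
      ⟨Real.neg_one_le_cos _, Real.cos_le_one _⟩
    have := hFS _ hmem
    rw [hF] at this
    simpa only [Polynomial.Chebyshev.T_real_cos] using this
  have hkey := key_identity d c hc (fun N hN j => cos_sum_eq N hN j)
  rw [← hI] at hkey
  -- sum of squares bound
  have hsqsum : (2 * (d : ℝ) + 1) * ∑ n ∈ I, (c n) ^ 2 ≤ (2 * (d : ℝ) + 1) * S ^ 2 := by
    rw [← hkey]
    calc ∑ k ∈ Finset.range (2 * d + 1),
          (∑ n ∈ I, c n * Real.cos (n * (2 * Real.pi * k / (2 * d + 1)))) ^ 2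
        ≤ ∑ _k ∈ Finset.range (2 * d + 1), S ^ 2 := by
          refine Finset.sum_le_sum fun k _ => ?_
          rw [← sq_abs]
          exact pow_le_pow_left₀ (abs_nonneg _) (hsample k) 2
      _ = (2 * (d : ℝ) + 1) * S ^ 2 := by
          rw [Finset.sum_const, Finset.card_range, nsmul_eq_mul]
          push_cast; ring
  have hNpos : (0 : ℝ) < 2 * (d : ℝ) + 1 := by positivity
  have hsq : ∑ n ∈ I, (c n) ^ 2 ≤ S ^ 2 := le_of_mul_le_mul_left hsqsum hNpos
  -- Cauchy–Schwarz
  have hcard : (I.card : ℝ) = 2 * (d : ℝ) + 1 := by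
    rw [hI, Int.card_Icc]
    have : ((d : ℤ) + 1 - -(d : ℤ)).toNat = 2 * d + 1 := by omega
    rw [this]; push_cast; ring
  have hCS : M ^ 2 ≤ (2 * (d : ℝ) + 1) * ∑ n ∈ I, (c n) ^ 2 := by
    have := sq_sum_le_card_mul_sum_sq (s := I) (f := fun n => |c n|)
    simpa only [sq_abs, hcard] using this
  have hM2 : M ^ 2 ≤ (2 * (d : ℝ) + 1) * S ^ 2 :=
    le_trans hCS (mul_le_mul_of_nonneg_left hsq (le_of_lt hNpos))
  have h2 : M ≤ Real.sqrt (2 * d + 1) * S := by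
    have : Real.sqrt (2 * d + 1) * S = Real.sqrt ((2 * (d : ℝ) + 1) * S ^ 2) := by
      rw [Real.sqrt_mul (le_of_lt hNpos), Real.sqrt_sq hS0]
    rw [this]
    have := Real.sqrt_le_sqrt hM2
    rwa [Real.sqrt_sq hM0] at this
  exact ⟨h1, h2⟩
end
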